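/- arXiv:2207.11204 — 2 statements merged into one kernel-verified Lean document; each statement's English description precedes it below -/
import Mathlib

section
/- Under Assumption 1, if θ := P(S₊ⁱ = 0) > 0, then θ = P(S₊ⁱ < ∞) / E(Sᵗ), where E(Sᵗ) := Σ_{k=1}^∞ k · π_k ∈ (0, ∞] is the expected typical cluster size; equivalently, θ · E(Sᵗ) = P(S₊ⁱ < ∞). -/
set_option maxHeartbeats 1000000


open MeasureTheory Filter Set ENNReal

noncomputable section

/-- The cluster `C(ω) = {t : I_t(ω) = 1}` of a binary process. -/
def clusterSet {Ω : Type*} (I : ℤ → Ω → Bool) (ω : Ω) : Set ℤ :=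
  {t : ℤ | I t ω = true}

/-- Inspected cluster size `Sⁱ(ω) = Σ_{t ∈ ℤ} I_t(ω) ∈ ℕ ∪ {∞}`. -/
def SiFn {Ω : Type*} (I : ℤ → Ω → Bool) (ω : Ω) : ℕ∞ :=
  {t : ℤ | I t ω = true}.encard

/-- Forward inspected cluster size `S₊ⁱ(ω) = Σ_{t ≥ 1} I_t(ω) ∈ ℕ₀ ∪ {∞}`. -/
def SplusFn {Ω : Type*} (I : ℤ → Ω → Bool) (ω : Ω) : ℕ∞ :=
  {t : ℤ | 0 < t ∧ I t ω = true}.encard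

/-- Backward inspected cluster size `S₋ⁱ(ω) = Σ_{t ≤ -1} I_t(ω) ∈ ℕ₀ ∪ {∞}`. -/
def SminusFn {Ω : Type*} (I : ℤ → Ω → Bool) (ω : Ω) : ℕ∞ :=
  {t : ℤ | t < 0 ∧ I t ω = true}.encard

namespace ClusterThm

abbrev X : Type := ℤ → Bool

def Pt (j : ℤ) : Set X := {f | f j = true}

def cyl (F : Finset ℤ) (ε : ℤ → Bool) : Set X := {f | ∀ t ∈ F, f t = ε t}

def shift (c : ℤ) (f : X) : X := fun t => f (t - c)

def cnt (S : Set ℤ) (f : X) : ℕ∞ := {t | t ∈ S ∧ f t = true}.encard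

lemma measurable_shift (c : ℤ) : Measurable (shift c) :=
  measurable_pi_lambda _ fun t => measurable_pi_apply (t - c)

lemma measurableSet_eval (t : ℤ) (b : Bool) : MeasurableSet {f : X | f t = b} := by
  have h : {f : X | f t = b} = (fun f : X => f t) ⁻¹' {b} := rfl
  rw [h]; exact measurable_pi_apply t (measurableSet_singleton b)

lemma measurableSet_Pt (j : ℤ) : MeasurableSet (Pt j) := measurableSet_eval j true

lemma measurableSet_cyl (F : Finset ℤ) (ε : ℤ → Bool) : MeasurableSet (cyl F ε) := by
  have : cyl F ε = ⋂ t ∈ F, {f : X | f t = ε t} := by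
    ext f; simp [cyl]
  rw [this]
  exact MeasurableSet.biInter F.countable_toSet fun t _ => measurableSet_eval t (ε t)

def cylSets : Set (Set X) := {A | ∃ F ε, A = cyl F ε}

lemma isPiSystem_cyl : IsPiSystem cylSets := by
  rintro _ ⟨F, ε, rfl⟩ _ ⟨G, δ, rfl⟩ hne
  obtain ⟨f, hf1, hf2⟩ := hne
  refine ⟨F ∪ G, fun t => if t ∈ F then ε t else δ t, ?_⟩
  ext g
  simp only [cyl, mem_inter_iff, mem_setOf_eq, Finset.mem_union]
  constructor
  · rintro ⟨h1, h2⟩ t ht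
    by_cases htF : t ∈ F
    · simp [htF, h1 t htF]
    · rw [if_neg htF]; exact h2 t (ht.resolve_left htF)
  · intro h
    refine ⟨fun t ht => ?_, fun t ht => ?_⟩
    · have := h t (Or.inl ht); rwa [if_pos ht] at this
    · by_cases htF : t ∈ F
      · have := h t (Or.inl htF); rw [if_pos htF] at this
        rw [this, ← hf1 t htF, hf2 t ht]
      · have := h t (Or.inr ht); rwa [if_neg htF] at this

lemma generateFrom_cyl :
    (inferInstance : MeasurableSpace X) = MeasurableSpace.generateFrom cylSets := by
  refine le_antisymm ?_ (MeasurableSpace.generateFrom_le ?_)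
  · show MeasurableSpace.pi ≤ _
    refine iSup_le fun t => ?_
    rintro s ⟨S, -, rfl⟩
    have h : (fun f : X => f t) ⁻¹' S = ⋃ (b : Bool) (_ : b ∈ S), cyl {t} (fun _ => b) := by
      ext g
      simp only [mem_preimage, mem_iUnion, cyl, Finset.mem_singleton, mem_setOf_eq]
      constructor
      · intro hg; exact ⟨g t, hg, fun u hu => by rw [hu]⟩
      · rintro ⟨b, hb, hgb⟩; have := hgb t rfl; rwa [this]
    rw [h]
    exact MeasurableSet.iUnion fun b => MeasurableSet.iUnion fun _ =>
      MeasurableSpace.measurableSet_generateFrom ⟨{t}, fun _ => b, rfl⟩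
  · rintro _ ⟨F, ε, rfl⟩
    exact measurableSet_cyl F ε

lemma cyl_empty (ε : ℤ → Bool) : cyl ∅ ε = univ := by
  ext f; simp [cyl]

lemma ext_cyl {Q Q' : Measure X} [IsFiniteMeasure Q]
    (h : ∀ F ε, Q (cyl F ε) = Q' (cyl F ε)) : Q = Q' := by
  refine ext_of_generate_finite cylSets generateFrom_cyl isPiSystem_cyl ?_ ?_
  · rintro _ ⟨F, ε, rfl⟩; exact h F ε
  · have := h ∅ (fun _ => true); rwa [cyl_empty] at this


/-! ### Counting lemmas -/

lemma cnt_mono {S T : Set ℤ} (h : S ⊆ T) (f : X) : cnt S f ≤ cnt T f :=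
  Set.encard_mono (fun t ht => ⟨h ht.1, ht.2⟩)

lemma cnt_union {S T : Set ℤ} (h : Disjoint S T) (f : X) :
    cnt (S ∪ T) f = cnt S f + cnt T f := by
  rw [cnt, cnt, cnt, ← Set.encard_union_eq
    (Disjoint.mono (fun t ht => ht.1) (fun t ht => ht.1) h)]
  congr 1; ext t
  simp only [mem_setOf_eq, mem_union]
  tauto

lemma cnt_eq_zero {S : Set ℤ} {f : X} : cnt S f = 0 ↔ ∀ t ∈ S, f t = false := by
  rw [cnt, Set.encard_eq_zero, Set.eq_empty_iff_forall_notMem]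
  constructor
  · intro h t ht
    have := h t
    simp only [mem_setOf_eq, ht, true_and] at this
    exact Bool.not_eq_true _ ▸ (by simpa using this)
  · intro h t
    simp only [mem_setOf_eq, not_and]
    intro ht
    rw [h t ht]; simp

lemma cnt_empty (f : X) : cnt ∅ f = 0 := by
  rw [cnt_eq_zero]; intro t ht; exact absurd ht (notMem_empty t)

lemma cnt_singleton (a : ℤ) (f : X) : cnt {a} f = if f a = true then 1 else 0 := by
  by_cases h : f a = true
  · rw [if_pos h, cnt]
    have : {t | t ∈ ({a} : Set ℤ) ∧ f t = true} = {a} := by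
      ext t; simp only [mem_setOf_eq, mem_singleton_iff]
      constructor
      · exact fun ht => ht.1
      · rintro rfl; exact ⟨rfl, h⟩
    rw [this, Set.encard_singleton]
  · rw [if_neg h, cnt_eq_zero]
    intro t ht
    rw [mem_singleton_iff] at ht
    subst ht
    exact Bool.not_eq_true _ ▸ (by simpa using h)

lemma cnt_shift (S : Set ℤ) (c : ℤ) (f : X) : cnt S (shift c f) = cnt ((· + c) ⁻¹' S) f := by
  have h : {t | t ∈ S ∧ shift c f t = true}
      = (· + c) '' {s | s ∈ (· + c) ⁻¹' S ∧ f s = true} := by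
    ext t
    simp only [mem_image, mem_setOf_eq, mem_preimage, shift]
    constructor
    · intro ht
      refine ⟨t - c, ⟨?_, ht.2⟩, by ring⟩
      have he : t - c + c = t := by ring
      rw [he]; exact ht.1
    · rintro ⟨s, ⟨hs1, hs2⟩, rfl⟩
      have he : s + c - c = s := by ring
      exact ⟨hs1, by rw [he]; exact hs2⟩
  rw [cnt, h, Set.InjOn.encard_image (fun x _ y _ hxy => by omega)]
  rfl

lemma measurableSet_cntEq (S : Set ℤ) (j : ℕ) :
    MeasurableSet {f : X | cnt S f = (j : ℕ∞)} := by
  have h : {f : X | cnt S f = (j : ℕ∞)} =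
      ⋃ (s : Finset ℤ) (_ : s.card = j ∧ ↑s ⊆ S),
        {f : X | ∀ t, t ∈ S → (f t = true ↔ t ∈ s)} := by
    ext f
    simp only [mem_setOf_eq, mem_iUnion]
    constructor
    · intro hf
      have hfin : {t | t ∈ S ∧ f t = true}.Finite := Set.finite_of_encard_eq_coe hf
      refine ⟨hfin.toFinset, ⟨?_, ?_⟩, ?_⟩
      · have h2 := hfin.encard_eq_coe_toFinset_card
        rw [cnt] at hf
        rw [hf] at h2
        exact_mod_cast h2.symm
      · intro t ht
        rw [Finset.mem_coe, Set.Finite.mem_toFinset] at ht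
        exact ht.1
      · intro t htS
        rw [Set.Finite.mem_toFinset]
        simp only [mem_setOf_eq, htS, true_and]
    · rintro ⟨s, ⟨hcard, hsub⟩, hall⟩
      have h2 : {t | t ∈ S ∧ f t = true} = (↑s : Set ℤ) := by
        ext t
        simp only [mem_setOf_eq, Finset.mem_coe]
        constructor
        · rintro ⟨ht1, ht2⟩; exact (hall t ht1).mp ht2
        · intro hts
          have htS := hsub hts
          exact ⟨htS, (hall t htS).mpr hts⟩
      rw [cnt, h2, Set.encard_coe_eq_coe_finsetCard, hcard]
  rw [h]
  refine MeasurableSet.iUnion fun s => MeasurableSet.iUnion fun _ => ?_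
  have h2 : {f : X | ∀ t, t ∈ S → (f t = true ↔ t ∈ s)} =
      ⋂ (t : ℤ), {f : X | t ∈ S → (f t = true ↔ t ∈ s)} := by
    ext f; simp only [mem_iInter, mem_setOf_eq]
  rw [h2]
  refine MeasurableSet.iInter fun t => ?_
  by_cases htS : t ∈ S
  · by_cases hts : t ∈ s
    · have h3 : {f : X | t ∈ S → (f t = true ↔ t ∈ s)} = {f : X | f t = true} := by
        ext f; simp [htS, hts]
      rw [h3]; exact measurableSet_eval t true
    · have h3 : {f : X | t ∈ S → (f t = true ↔ t ∈ s)} = {f : X | f t = false} := by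
        ext f; simp [htS, hts]
      rw [h3]; exact measurableSet_eval t false
  · have h3 : {f : X | t ∈ S → (f t = true ↔ t ∈ s)} = univ := by
      ext f; simp [htS]
    rw [h3]; exact MeasurableSet.univ

lemma measurableSet_cntTop (S : Set ℤ) : MeasurableSet {f : X | cnt S f = ⊤} := by
  have h : {f : X | cnt S f = ⊤} = (⋃ j : ℕ, {f : X | cnt S f = (j : ℕ∞)})ᶜ := by
    ext f
    simp only [mem_compl_iff, mem_iUnion, mem_setOf_eq, not_exists]
    constructor
    · intro hf j hj
      rw [hf] at hj
      exact (ENat.top_ne_coe j) hj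
    · intro hf
      by_contra hne
      obtain ⟨j, hj⟩ := WithTop.ne_top_iff_exists.mp hne
      exact hf j hj.symm
  rw [h]
  exact (MeasurableSet.iUnion fun j => measurableSet_cntEq S j).compl

lemma measurableSet_cntNeTop (S : Set ℤ) : MeasurableSet {f : X | cnt S f ≠ ⊤} := by
  have h : {f : X | cnt S f ≠ ⊤} = {f : X | cnt S f = ⊤}ᶜ := rfl
  rw [h]; exact (measurableSet_cntTop S).compl

lemma cnt_Ico_succ (a b : ℤ) (h : a ≤ b) (f : X) :
    cnt (Ico a (b + 1)) f = cnt (Ico a b) f + (if f b = true then 1 else 0) := by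
  have h1 : Ico a (b + 1) = Ico a b ∪ {b} := by
    ext t; simp only [mem_Ico, mem_union, mem_singleton_iff]; omega
  have h2 : Disjoint (Ico a b) ({b} : Set ℤ) := by
    rw [Set.disjoint_singleton_right]; simp [mem_Ico]
  rw [h1, cnt_union h2, cnt_singleton]

lemma exists_jump (f : X) (j : ℕ) (h : (j : ℕ∞) + 1 ≤ cnt (Ici 0) f) :
    ∃ r : ℕ, cnt (Ico (0:ℤ) (r:ℤ)) f = (j : ℕ∞) ∧ f (r:ℤ) = true := by
  classical
  have hcast : ((j + 1 : ℕ) : ℕ∞) ≤ cnt (Ici 0) f := by push_cast; exact h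
  obtain ⟨T, hTsub, hTcard⟩ := Set.exists_subset_encard_eq hcast
  have hTfin : T.Finite := Set.finite_of_encard_eq_coe hTcard
  have hTne : T.Nonempty := by
    rw [← Set.encard_ne_zero, hTcard]
    simp
  obtain ⟨M, hMT, hMmax⟩ := Set.exists_max_image T id hTfin hTne
  have hM0 : (0:ℤ) ≤ M := (hTsub hMT).1
  set N : ℕ := (M + 1).toNat with hN
  have hNM : (N : ℤ) = M + 1 := Int.toNat_of_nonneg (by omega)
  have hbase : (j : ℕ∞) + 1 ≤ cnt (Ico (0:ℤ) (N:ℤ)) f := by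
    have hsub2 : T ⊆ {t | t ∈ Ico (0:ℤ) (N:ℤ) ∧ f t = true} := by
      intro t ht
      have h1 := hTsub ht
      have h2 := hMmax t ht
      simp only [id] at h2
      exact ⟨⟨h1.1, by omega⟩, h1.2⟩
    calc (j : ℕ∞) + 1 = T.encard := by rw [hTcard]; push_cast; rfl
    _ ≤ cnt (Ico (0:ℤ) (N:ℤ)) f := Set.encard_mono hsub2
  have hex : ∃ r : ℕ, (j : ℕ∞) + 1 ≤ cnt (Ico (0:ℤ) (r:ℤ)) f := ⟨N, hbase⟩
  have hr₀ne : Nat.find hex ≠ 0 := by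
    intro h0
    have hsp := Nat.find_spec hex
    rw [h0] at hsp
    rw [show Ico (0:ℤ) ((0:ℕ):ℤ) = (∅ : Set ℤ) by simp] at hsp
    rw [cnt_empty] at hsp
    simp at hsp
  obtain ⟨r, hr⟩ : ∃ r, Nat.find hex = r + 1 := ⟨Nat.find hex - 1, by omega⟩
  have hr₀spec := Nat.find_spec hex
  rw [hr] at hr₀spec
  have hmin : ¬ ((j : ℕ∞) + 1 ≤ cnt (Ico (0:ℤ) (r:ℤ)) f) := Nat.find_min hex (by omega)
  have hstep : cnt (Ico (0:ℤ) ((r:ℤ) + 1)) f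
      = cnt (Ico (0:ℤ) (r:ℤ)) f + (if f (r:ℤ) = true then 1 else 0) :=
    cnt_Ico_succ 0 r (by omega) f
  have hcast2 : (((r:ℕ) + 1 : ℕ) : ℤ) = (r : ℤ) + 1 := by push_cast; ring
  rw [hcast2] at hr₀spec
  have hfr : f (r:ℤ) = true := by
    by_contra hfr
    rw [hstep, if_neg hfr, add_zero] at hr₀spec
    exact hmin hr₀spec
  refine ⟨r, ?_, hfr⟩
  rw [hstep, if_pos hfr] at hr₀spec
  have hfin : cnt (Ico (0:ℤ) (r:ℤ)) f ≠ ⊤ := by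
    rw [cnt, Set.encard_ne_top_iff]
    exact Set.Finite.subset (Set.finite_Ico (0:ℤ) (r:ℤ)) (fun t ht => ht.1)
  have hle : (j : ℕ∞) ≤ cnt (Ico (0:ℤ) (r:ℤ)) f :=
    (WithTop.add_le_add_iff_right (by simp : (1:ℕ∞) ≠ ⊤)).mp hr₀spec
  have hge : cnt (Ico (0:ℤ) (r:ℤ)) f ≤ (j : ℕ∞) := by
    have hlt : cnt (Ico (0:ℤ) (r:ℤ)) f < (j : ℕ∞) + 1 := not_le.mp hmin
    have := (ENat.add_one_le_iff hfin).mpr hlt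
    exact (WithTop.add_le_add_iff_right (by simp : (1:ℕ∞) ≠ ⊤)).mp this
  exact le_antisymm hge hle


/-! ### Splitting lemmas -/

lemma cnt_split {S A B : Set ℤ} (hS : S = A ∪ B) (hd : Disjoint A B) (f : X) :
    cnt S f = cnt A f + cnt B f := by rw [hS, cnt_union hd]

lemma disj_of_mem_iff {A B : Set ℤ} (h : ∀ t, t ∈ A → t ∈ B → False) : Disjoint A B :=
  Set.disjoint_left.mpr h

lemma cnt_split_Iio (R : ℤ) (hR : 0 ≤ R) (f : X) :
    cnt (Iio R) f = cnt (Iio 0) f + cnt (Ico 0 R) f :=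
  cnt_split (by ext t; simp only [mem_Iio, mem_union, mem_Ico]; omega)
    (disj_of_mem_iff (by intro t h1 h2; simp only [mem_Iio] at h1; simp only [mem_Ico] at h2; omega)) f

lemma cnt_split_univ (f : X) : cnt univ f = cnt (Iio 0) f + cnt (Ici 0) f :=
  cnt_split (by ext t; simp only [mem_univ, true_iff, mem_union, mem_Iio, mem_Ici]; omega)
    (disj_of_mem_iff (by intro t h1 h2; simp only [mem_Iio] at h1; simp only [mem_Ici] at h2; omega)) f

lemma cnt_split_Ici0 (f : X) : cnt (Ici (0:ℤ)) f = cnt {0} f + cnt (Ioi 0) f :=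
  cnt_split (by ext t; simp only [mem_Ici, mem_union, mem_singleton_iff, mem_Ioi]; omega)
    (disj_of_mem_iff (by intro t h1 h2; simp only [mem_singleton_iff] at h1; simp only [mem_Ioi] at h2; omega)) f

lemma cnt_split_Ioi (R : ℤ) (hR : 0 ≤ R) (f : X) :
    cnt (Ioi (0:ℤ)) f = cnt (Ioc 0 R) f + cnt (Ioi R) f :=
  cnt_split (by ext t; simp only [mem_Ioi, mem_union, mem_Ioc]; omega)
    (disj_of_mem_iff (by intro t h1 h2; simp only [mem_Ioc] at h1; simp only [mem_Ioi] at h2; omega)) f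

lemma cnt_split_Iio0 (R : ℤ) (hR : 0 ≤ R) (f : X) :
    cnt (Iio (0:ℤ)) f = cnt (Iio (-R)) f + cnt (Ico (-R) 0) f :=
  cnt_split (by ext t; simp only [mem_Iio, mem_union, mem_Ico]; omega)
    (disj_of_mem_iff (by intro t h1 h2; simp only [mem_Iio] at h1; simp only [mem_Ico] at h2; omega)) f

lemma cnt_neg (S : Set ℤ) (f : X) :
    cnt S f = cnt ((fun t => -t) ⁻¹' S) (fun t => f (-t)) := by
  have h : {t | t ∈ S ∧ f t = true}
      = (fun t : ℤ => -t) '' {s | s ∈ (fun t : ℤ => -t) ⁻¹' S ∧ f (-s) = true} := by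
    ext t
    simp only [mem_image, mem_setOf_eq, mem_preimage]
    constructor
    · intro ht
      refine ⟨-t, ⟨?_, ?_⟩, by ring⟩
      · rw [neg_neg]; exact ht.1
      · rw [neg_neg]; exact ht.2
    · rintro ⟨s, ⟨hs1, hs2⟩, rfl⟩
      exact ⟨hs1, hs2⟩
  rw [cnt, h, Set.InjOn.encard_image (fun x _ y _ hxy => by omega)]
  rfl

lemma cnt_pt_one {a : ℤ} {f : X} (h : f a = true) : cnt {a} f = 1 := by
  rw [cnt_singleton, if_pos h]

lemma pairwise_disjoint_of_lt {A : ℕ → Set X}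
    (h : ∀ r r' : ℕ, r < r' → ∀ f, f ∈ A r → f ∈ A r' → False) :
    Pairwise (Function.onFun Disjoint A) := by
  intro r r' hne
  rcases hne.lt_or_gt with h1 | h1
  · exact Set.disjoint_left.mpr fun f hf hf' => h _ _ h1 f hf hf'
  · exact Set.disjoint_left.mpr fun f hf hf' => h _ _ h1 f hf' hf


/-! ### Key Mecke-type identity: distribution of cluster with j points to the left -/

lemma keyE (Q : Measure X) [IsProbabilityMeasure Q]
    (hM : ∀ (c : ℤ) (A : Set X), MeasurableSet A →
      Q (A ∩ Pt c) = Q (shift c ⁻¹' A ∩ Pt (-c)))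
    (k j : ℕ) (hj : 1 ≤ j) (hjk : j + 1 ≤ k) :
    Q ({f | cnt univ f = (k:ℕ∞)} ∩ {f | cnt (Iio 0) f = (j:ℕ∞)} ∩ Pt 0)
      = Q ({f | cnt univ f = (k:ℕ∞)} ∩ {f | cnt (Iio 0) f = ((0:ℕ):ℕ∞)} ∩ Pt 0) := by
  classical
  set A : ℕ → Set X := fun r =>
    {f | cnt univ f = (k:ℕ∞)} ∩ {f | cnt (Iio 0) f = (j:ℕ∞)} ∩ Pt 0 ∩ Pt (-((r:ℤ)+1))
      ∩ {f | cnt (Iio (-((r:ℤ)+1))) f = ((0:ℕ):ℕ∞)} with hA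
  set B : ℕ → Set X := fun r =>
    {f | cnt univ f = (k:ℕ∞)} ∩ {f | cnt (Iio ((r:ℤ)+1)) f = (j:ℕ∞)} ∩ Pt ((r:ℤ)+1) ∩ Pt 0
      ∩ {f | cnt (Iio 0) f = ((0:ℕ):ℕ∞)} with hB
  have hAmeas : ∀ r, MeasurableSet (A r) := fun r =>
    ((((measurableSet_cntEq univ k).inter (measurableSet_cntEq _ j)).inter
      (measurableSet_Pt 0)).inter (measurableSet_Pt _)).inter (measurableSet_cntEq _ 0)
  have hBmeas : ∀ r, MeasurableSet (B r) := fun r =>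
    ((((measurableSet_cntEq univ k).inter (measurableSet_cntEq _ j)).inter
      (measurableSet_Pt _)).inter (measurableSet_Pt 0)).inter (measurableSet_cntEq _ 0)
  have hAB : ∀ r, Q (A r) = Q (B r) := by
    intro r
    have h1 := hM (-((r:ℤ)+1)) (A r) (hAmeas r)
    have h2 : A r ∩ Pt (-((r:ℤ)+1)) = A r :=
      inter_eq_self_of_subset_left fun f hf => hf.1.2
    have e1 : ∀ f : X, cnt univ (shift (-((r:ℤ)+1)) f) = cnt univ f := by
      intro f; rw [cnt_shift]; congr 1
    have e2 : ∀ f : X, cnt (Iio 0) (shift (-((r:ℤ)+1)) f) = cnt (Iio ((r:ℤ)+1)) f := by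
      intro f; rw [cnt_shift]; congr 1; ext s
      simp only [mem_preimage, mem_Iio]; omega
    have e3 : ∀ f : X, cnt (Iio (-((r:ℤ)+1))) (shift (-((r:ℤ)+1)) f) = cnt (Iio 0) f := by
      intro f; rw [cnt_shift]; congr 1; ext s
      simp only [mem_preimage, mem_Iio]; omega
    have iv1 : ∀ f : X, (shift (-((r:ℤ)+1)) f) 0 = f ((r:ℤ)+1) := by
      intro f; show f (0 - -((r:ℤ)+1)) = f ((r:ℤ)+1); congr 1; ring
    have iv2 : ∀ f : X, (shift (-((r:ℤ)+1)) f) (-((r:ℤ)+1)) = f 0 := by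
      intro f; show f (-((r:ℤ)+1) - -((r:ℤ)+1)) = f 0; congr 1; ring
    have h3 : shift (-((r:ℤ)+1)) ⁻¹' A r ∩ Pt (- -((r:ℤ)+1)) = B r := by
      ext f
      simp only [hA, hB, mem_inter_iff, mem_preimage, mem_setOf_eq, Pt,
        e1 f, e2 f, e3 f, iv1 f, iv2 f, neg_neg]
      tauto
    rw [h2, h3] at h1
    exact h1
  have hAunion : (⋃ r, A r)
      = {f | cnt univ f = (k:ℕ∞)} ∩ {f | cnt (Iio 0) f = (j:ℕ∞)} ∩ Pt 0 := by
    apply Set.Subset.antisymm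
    · exact iUnion_subset fun r f hf => hf.1.1
    · rintro f ⟨⟨h1, h2⟩, h3⟩
      have hne : {t | t ∈ Iio (0:ℤ) ∧ f t = true}.Nonempty := by
        rw [← Set.encard_ne_zero]
        rw [mem_setOf_eq] at h2
        rw [show {t | t ∈ Iio (0:ℤ) ∧ f t = true}.encard = cnt (Iio 0) f from rfl, h2]
        exact_mod_cast Nat.cast_ne_zero.mpr (by omega)
      have hfin : {t | t ∈ Iio (0:ℤ) ∧ f t = true}.Finite := by
        apply Set.finite_of_encard_eq_coe
        exact h2
      obtain ⟨m, hmA, hmin⟩ := Set.exists_min_image _ id hfin hne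
      have hm0 : m < 0 := hmA.1
      refine mem_iUnion.mpr ⟨(-m-1).toNat, ?_⟩
      have hcast : ((-m-1).toNat : ℤ) = -m-1 := Int.toNat_of_nonneg (by omega)
      have hpos : -(((-m-1).toNat : ℤ)+1) = m := by rw [hcast]; ring
      refine ⟨⟨⟨⟨h1, h2⟩, h3⟩, ?_⟩, ?_⟩
      · show f (-(((-m-1).toNat : ℤ)+1)) = true
        rw [hpos]; exact hmA.2
      · show cnt (Iio (-(((-m-1).toNat : ℤ)+1))) f = ((0:ℕ):ℕ∞)
        rw [hpos]
        rw [show ((0:ℕ):ℕ∞) = 0 from rfl, cnt_eq_zero]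
        intro t ht
        rw [mem_Iio] at ht
        cases hft : f t with
        | false => rfl
        | true =>
          have := hmin t ⟨by rw [mem_Iio]; omega, hft⟩
          simp only [id] at this
          omega
  have hBunion : (⋃ r, B r)
      = {f | cnt univ f = (k:ℕ∞)} ∩ {f | cnt (Iio 0) f = ((0:ℕ):ℕ∞)} ∩ Pt 0 := by
    apply Set.Subset.antisymm
    · exact iUnion_subset fun r f hf => ⟨⟨hf.1.1.1.1, hf.2⟩, hf.1.2⟩
    · rintro f ⟨⟨h1, h2⟩, h3⟩
      rw [mem_setOf_eq] at h1 h2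
      have hIci : cnt (Ici 0) f = (k:ℕ∞) := by
        have := cnt_split_univ f
        rw [h1, h2] at this
        simpa using this.symm
      have hjump : (j:ℕ∞) + 1 ≤ cnt (Ici 0) f := by
        rw [hIci]
        exact_mod_cast Nat.cast_le.mpr hjk
      obtain ⟨r₁, hr₁, hfr₁⟩ := exists_jump f j hjump
      have hr₁ne : r₁ ≠ 0 := by
        intro h0
        rw [h0] at hr₁
        rw [show Ico (0:ℤ) ((0:ℕ):ℤ) = (∅:Set ℤ) by simp] at hr₁
        rw [cnt_empty] at hr₁
        have : j = 0 := by exact_mod_cast hr₁.symm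
        omega
      refine mem_iUnion.mpr ⟨r₁ - 1, ?_⟩
      have hcast : ((r₁ - 1 : ℕ) : ℤ) + 1 = (r₁ : ℤ) := by omega
      refine ⟨⟨⟨⟨h1, ?_⟩, ?_⟩, h3⟩, h2⟩
      · show cnt (Iio (((r₁-1:ℕ):ℤ)+1)) f = (j:ℕ∞)
        rw [hcast, cnt_split_Iio (r₁:ℤ) (by omega) f, h2, hr₁]
        simp
      · show f (((r₁-1:ℕ):ℤ)+1) = true
        rw [hcast]; exact hfr₁
  have hAdisj : Pairwise (Function.onFun Disjoint A) := by
    apply pairwise_disjoint_of_lt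
    intro r r' hrr f hf hf'
    have hz : cnt (Iio (-((r:ℤ)+1))) f = 0 := hf.2
    have hw : f (-((r':ℤ)+1)) = true := hf'.1.2
    rw [cnt_eq_zero] at hz
    have := hz (-((r':ℤ)+1)) (by rw [mem_Iio]; omega)
    rw [hw] at this
    simp at this
  have hBdisj : Pairwise (Function.onFun Disjoint B) := by
    apply pairwise_disjoint_of_lt
    intro r r' hrr f hf hf'
    have h1 : cnt (Iio ((r:ℤ)+1)) f = (j:ℕ∞) := hf.1.1.1.2
    have h2 : f ((r:ℤ)+1) = true := hf.1.1.2
    have h3 : cnt (Iio ((r':ℤ)+1)) f = (j:ℕ∞) := hf'.1.1.1.2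
    have hsub : Iio ((r:ℤ)+1) ∪ {(r:ℤ)+1} ⊆ Iio ((r':ℤ)+1) := by
      intro t ht
      rcases ht with ht | ht
      · rw [mem_Iio] at ht ⊢; omega
      · rw [mem_singleton_iff] at ht; rw [mem_Iio]; omega
    have hdisj2 : Disjoint (Iio ((r:ℤ)+1)) ({(r:ℤ)+1} : Set ℤ) :=
      disj_of_mem_iff (by intro t ht1 ht2; rw [mem_Iio] at ht1; rw [mem_singleton_iff] at ht2; omega)
    have hle : cnt (Iio ((r:ℤ)+1) ∪ {(r:ℤ)+1}) f ≤ cnt (Iio ((r':ℤ)+1)) f := cnt_mono hsub f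
    rw [cnt_union hdisj2, h1, cnt_pt_one h2, h3] at hle
    have : j + 1 ≤ j := by exact_mod_cast hle
    omega
  calc Q ({f | cnt univ f = (k:ℕ∞)} ∩ {f | cnt (Iio 0) f = (j:ℕ∞)} ∩ Pt 0)
      = Q (⋃ r, A r) := by rw [hAunion]
    _ = ∑' r, Q (A r) := measure_iUnion hAdisj hAmeas
    _ = ∑' r, Q (B r) := by exact tsum_congr hAB
    _ = Q (⋃ r, B r) := (measure_iUnion hBdisj hBmeas).symm
    _ = _ := by rw [hBunion]


lemma keyCD (Q : Measure X) [IsProbabilityMeasure Q]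
    (hM : ∀ (c : ℤ) (A : Set X), MeasurableSet A →
      Q (A ∩ Pt c) = Q (shift c ⁻¹' A ∩ Pt (-c)))
    (j : ℕ) (hj : 1 ≤ j) :
    Q ({f | cnt (Iio 0) f = ⊤} ∩ {f | cnt (Ioi 0) f = (j:ℕ∞)} ∩ Pt 0)
      = Q ({f | cnt (Iio 0) f = ⊤} ∩ {f | cnt (Ioi 0) f = ((0:ℕ):ℕ∞)} ∩ Pt 0) := by
  classical
  set C : ℕ → Set X := fun r =>
    {f | cnt (Iio 0) f = ⊤} ∩ {f | cnt (Ioc 0 ((r:ℤ)+1)) f = (j:ℕ∞)} ∩ Pt 0 ∩ Pt ((r:ℤ)+1)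
      ∩ {f | cnt (Ioi ((r:ℤ)+1)) f = ((0:ℕ):ℕ∞)} with hC
  set D : ℕ → Set X := fun r =>
    {f | cnt (Iio (-((r:ℤ)+1))) f = ⊤} ∩ {f | cnt (Ioc (-((r:ℤ)+1)) 0) f = (j:ℕ∞)}
      ∩ Pt (-((r:ℤ)+1)) ∩ Pt 0 ∩ {f | cnt (Ioi 0) f = ((0:ℕ):ℕ∞)} with hD
  have hCmeas : ∀ r, MeasurableSet (C r) := fun r =>
    ((((measurableSet_cntTop _).inter (measurableSet_cntEq _ j)).inter
      (measurableSet_Pt 0)).inter (measurableSet_Pt _)).inter (measurableSet_cntEq _ 0)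
  have hDmeas : ∀ r, MeasurableSet (D r) := fun r =>
    ((((measurableSet_cntTop _).inter (measurableSet_cntEq _ j)).inter
      (measurableSet_Pt _)).inter (measurableSet_Pt 0)).inter (measurableSet_cntEq _ 0)
  have hCD : ∀ r, Q (C r) = Q (D r) := by
    intro r
    have h1 := hM ((r:ℤ)+1) (C r) (hCmeas r)
    have h2 : C r ∩ Pt ((r:ℤ)+1) = C r :=
      inter_eq_self_of_subset_left fun f hf => hf.1.2
    have e1 : ∀ f : X, cnt (Iio 0) (shift ((r:ℤ)+1) f) = cnt (Iio (-((r:ℤ)+1))) f := by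
      intro f; rw [cnt_shift]; congr 1; ext s
      simp only [mem_preimage, mem_Iio]; omega
    have e2 : ∀ f : X, cnt (Ioc 0 ((r:ℤ)+1)) (shift ((r:ℤ)+1) f)
        = cnt (Ioc (-((r:ℤ)+1)) 0) f := by
      intro f; rw [cnt_shift]; congr 1; ext s
      simp only [mem_preimage, mem_Ioc]; omega
    have e3 : ∀ f : X, cnt (Ioi ((r:ℤ)+1)) (shift ((r:ℤ)+1) f) = cnt (Ioi 0) f := by
      intro f; rw [cnt_shift]; congr 1; ext s
      simp only [mem_preimage, mem_Ioi]; omega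
    have iv1 : ∀ f : X, (shift ((r:ℤ)+1) f) 0 = f (-((r:ℤ)+1)) := by
      intro f; show f (0 - ((r:ℤ)+1)) = f (-((r:ℤ)+1)); rw [zero_sub]
    have iv2 : ∀ f : X, (shift ((r:ℤ)+1) f) ((r:ℤ)+1) = f 0 := by
      intro f; show f (((r:ℤ)+1) - ((r:ℤ)+1)) = f 0; rw [sub_self]
    have h3 : shift ((r:ℤ)+1) ⁻¹' C r ∩ Pt (-((r:ℤ)+1)) = D r := by
      ext f
      simp only [hC, hD, mem_inter_iff, mem_preimage, mem_setOf_eq, Pt,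
        e1 f, e2 f, e3 f, iv1 f, iv2 f]
      tauto
    rw [h2, h3] at h1
    exact h1
  have hCunion : (⋃ r, C r)
      = {f | cnt (Iio 0) f = ⊤} ∩ {f | cnt (Ioi 0) f = (j:ℕ∞)} ∩ Pt 0 := by
    apply Set.Subset.antisymm
    · intro g hg
      obtain ⟨r, hr⟩ := mem_iUnion.mp hg
      obtain ⟨⟨⟨⟨m1, m2⟩, m3⟩, m4⟩, m5⟩ := hr
      refine ⟨⟨m1, ?_⟩, m3⟩
      rw [mem_setOf_eq] at m2 m5 ⊢
      rw [cnt_split_Ioi ((r:ℤ)+1) (by omega) g, m2, m5]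
      simp
    · rintro f ⟨⟨h1, h2⟩, h3⟩
      rw [mem_setOf_eq] at h1 h2
      have hne : {t | t ∈ Ioi (0:ℤ) ∧ f t = true}.Nonempty := by
        rw [← Set.encard_ne_zero]
        rw [show {t | t ∈ Ioi (0:ℤ) ∧ f t = true}.encard = cnt (Ioi 0) f from rfl, h2]
        exact_mod_cast Nat.cast_ne_zero.mpr (by omega)
      have hfin : {t | t ∈ Ioi (0:ℤ) ∧ f t = true}.Finite :=
        Set.finite_of_encard_eq_coe h2
      obtain ⟨M, hMA, hmax⟩ := Set.exists_max_image _ id hfin hne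
      have hM0 : 0 < M := hMA.1
      refine mem_iUnion.mpr ⟨(M-1).toNat, ?_⟩
      have hcast : (((M-1).toNat : ℤ)+1) = M := by
        rw [Int.toNat_of_nonneg (by omega)]; ring
      have hIoiM : cnt (Ioi M) f = 0 := by
        rw [cnt_eq_zero]
        intro t ht
        rw [mem_Ioi] at ht
        cases hft : f t with
        | false => rfl
        | true =>
          have := hmax t ⟨by rw [mem_Ioi]; omega, hft⟩
          simp only [id] at this
          omega
      have hIoc : cnt (Ioc 0 M) f = (j:ℕ∞) := by
        have := cnt_split_Ioi M (by omega) f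
        rw [h2, hIoiM, add_zero] at this
        exact this.symm
      refine ⟨⟨⟨⟨h1, ?_⟩, h3⟩, ?_⟩, ?_⟩
      · show cnt (Ioc 0 (((M-1).toNat : ℤ)+1)) f = (j:ℕ∞)
        rw [hcast]; exact hIoc
      · show f (((M-1).toNat : ℤ)+1) = true
        rw [hcast]; exact hMA.2
      · show cnt (Ioi (((M-1).toNat : ℤ)+1)) f = ((0:ℕ):ℕ∞)
        rw [hcast]; exact hIoiM
  have hDunion : (⋃ r, D r)
      = {f | cnt (Iio 0) f = ⊤} ∩ {f | cnt (Ioi 0) f = ((0:ℕ):ℕ∞)} ∩ Pt 0 := by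
    apply Set.Subset.antisymm
    · intro g hg
      obtain ⟨r, hr⟩ := mem_iUnion.mp hg
      obtain ⟨⟨⟨⟨m1, m2⟩, m3⟩, m4⟩, m5⟩ := hr
      refine ⟨⟨?_, m5⟩, m4⟩
      rw [mem_setOf_eq] at m1 ⊢
      rw [cnt_split_Iio0 ((r:ℤ)+1) (by omega) g, m1, top_add]
    · rintro f ⟨⟨h1, h2⟩, h3⟩
      rw [mem_setOf_eq] at h1 h2
      set g : X := fun t => f (-t) with hg
      have hIoig : cnt (Ioi 0) g = ⊤ := by
        have := cnt_neg (Iio 0) f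
        rw [h1] at this
        have hseteq : ((fun t : ℤ => -t) ⁻¹' Iio 0) = Ioi 0 := by
          ext s; simp only [mem_preimage, mem_Iio, mem_Ioi]; omega
        rw [hseteq] at this
        exact this.symm
      have hjump : (j:ℕ∞) + 1 ≤ cnt (Ici 0) g :=
        le_trans le_top (le_trans (le_of_eq hIoig.symm)
          (cnt_mono Set.Ioi_subset_Ici_self g))
      obtain ⟨r₁, hr₁, hfr₁⟩ := exists_jump g j hjump
      have hr₁ne : r₁ ≠ 0 := by
        intro h0
        rw [h0] at hr₁
        rw [show Ico (0:ℤ) ((0:ℕ):ℤ) = (∅:Set ℤ) by simp] at hr₁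
        rw [cnt_empty] at hr₁
        have : j = 0 := by exact_mod_cast hr₁.symm
        omega
      refine mem_iUnion.mpr ⟨r₁ - 1, ?_⟩
      have hcast : (((r₁-1:ℕ):ℤ)+1) = (r₁:ℤ) := by omega
      have hIoc : cnt (Ioc (-(r₁:ℤ)) 0) f = (j:ℕ∞) := by
        have := cnt_neg (Ioc (-(r₁:ℤ)) 0) f
        have hseteq : ((fun t : ℤ => -t) ⁻¹' Ioc (-(r₁:ℤ)) 0) = Ico 0 (r₁:ℤ) := by
          ext s; simp only [mem_preimage, mem_Ioc, mem_Ico]; omega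
        rw [hseteq] at this
        rw [this, hr₁]
      have hIco_fin : cnt (Ico (-(r₁:ℤ)) 0) f ≠ ⊤ := by
        rw [cnt, Set.encard_ne_top_iff]
        exact Set.Finite.subset (Set.finite_Ico _ _) (fun t ht => ht.1)
      have hIioTop : cnt (Iio (-(r₁:ℤ))) f = ⊤ := by
        have := cnt_split_Iio0 (r₁:ℤ) (by omega) f
        rw [h1] at this
        rcases (WithTop.add_eq_top).mp this.symm with h | h
        · exact h
        · exact absurd h hIco_fin
      refine ⟨⟨⟨⟨?_, ?_⟩, ?_⟩, h3⟩, h2⟩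
      · show cnt (Iio (-(((r₁-1:ℕ):ℤ)+1))) f = ⊤
        rw [hcast]; exact hIioTop
      · show cnt (Ioc (-(((r₁-1:ℕ):ℤ)+1)) 0) f = (j:ℕ∞)
        rw [hcast]; exact hIoc
      · show f (-(((r₁-1:ℕ):ℤ)+1)) = true
        rw [hcast]; exact hfr₁
  have hCdisj : Pairwise (Function.onFun Disjoint C) := by
    apply pairwise_disjoint_of_lt
    intro r r' hrr f hf hf'
    have hz : cnt (Ioi ((r:ℤ)+1)) f = ((0:ℕ):ℕ∞) := hf.2
    have hw : f ((r':ℤ)+1) = true := hf'.1.2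
    rw [show ((0:ℕ):ℕ∞) = 0 from rfl, cnt_eq_zero] at hz
    have := hz ((r':ℤ)+1) (by rw [mem_Ioi]; omega)
    rw [hw] at this
    simp at this
  have hDdisj : Pairwise (Function.onFun Disjoint D) := by
    apply pairwise_disjoint_of_lt
    intro r r' hrr f hf hf'
    have h1 : cnt (Ioc (-((r:ℤ)+1)) 0) f = (j:ℕ∞) := hf.1.1.1.2
    have h2 : f (-((r:ℤ)+1)) = true := hf.1.1.2
    have h3 : cnt (Ioc (-((r':ℤ)+1)) 0) f = (j:ℕ∞) := hf'.1.1.1.2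
    have hsub : Ioc (-((r:ℤ)+1)) 0 ∪ {-((r:ℤ)+1)} ⊆ Ioc (-((r':ℤ)+1)) 0 := by
      intro t ht
      rcases ht with ht | ht
      · rw [mem_Ioc] at ht ⊢; omega
      · rw [mem_singleton_iff] at ht; rw [mem_Ioc]; omega
    have hdisj2 : Disjoint (Ioc (-((r:ℤ)+1)) 0) ({-((r:ℤ)+1)} : Set ℤ) :=
      disj_of_mem_iff (by
        intro t ht1 ht2
        rw [mem_Ioc] at ht1; rw [mem_singleton_iff] at ht2; omega)
    have hle : cnt (Ioc (-((r:ℤ)+1)) 0 ∪ {-((r:ℤ)+1)}) f ≤ cnt (Ioc (-((r':ℤ)+1)) 0) f :=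
      cnt_mono hsub f
    rw [cnt_union hdisj2, h1, cnt_pt_one h2, h3] at hle
    have : j + 1 ≤ j := by exact_mod_cast hle
    omega
  calc Q ({f | cnt (Iio 0) f = ⊤} ∩ {f | cnt (Ioi 0) f = (j:ℕ∞)} ∩ Pt 0)
      = Q (⋃ r, C r) := by rw [hCunion]
    _ = ∑' r, Q (C r) := measure_iUnion hCdisj hCmeas
    _ = ∑' r, Q (D r) := tsum_congr hCD
    _ = Q (⋃ r, D r) := (measure_iUnion hDdisj hDmeas).symm
    _ = _ := by rw [hDunion]


lemma cnt_univ_ne_top_iff (f : X) :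
    cnt univ f ≠ ⊤ ↔ (cnt (Iio 0) f ≠ ⊤ ∧ cnt (Ioi 0) f ≠ ⊤) := by
  have hs : cnt univ f = cnt (Iio 0) f + (cnt {0} f + cnt (Ioi 0) f) := by
    rw [cnt_split_univ f, cnt_split_Ici0 f]
  have h0 : cnt {0} f ≠ ⊤ := by
    rw [cnt_singleton]
    split <;> simp
  rw [hs]
  constructor
  · intro h
    constructor
    · intro htop; rw [htop, top_add] at h; exact h rfl
    · intro htop; rw [htop] at h
      rw [add_top, add_top] at h; exact h rfl
  · rintro ⟨h1, h2⟩ htop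
    rcases WithTop.add_eq_top.mp htop with h | h
    · exact h1 h
    rcases WithTop.add_eq_top.mp h with h' | h'
    · exact h0 h'
    · exact h2 h'

lemma main_on_X (Q : Measure X) [IsProbabilityMeasure Q]
    (hQ0 : Q (Pt 0) = 1)
    (hM : ∀ (c : ℤ) (A : Set X), MeasurableSet A →
      Q (A ∩ Pt c) = Q (shift c ⁻¹' A ∩ Pt (-c)))
    (hsym : Q {f | cnt (Iio 0) f = (0:ℕ∞)} = Q {f | cnt (Ioi 0) f = (0:ℕ∞)})
    (hθ : 0 < Q {f | cnt (Ioi 0) f = (0:ℕ∞)}) :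
    Q {f | cnt (Ioi 0) f = (0:ℕ∞)} * (∑' k : ℕ, (k : ℝ≥0∞) *
        (Q ({f | cnt univ f = (k:ℕ∞)} ∩ {f | cnt (Iio 0) f = (0:ℕ∞)})
          / Q {f | cnt (Iio 0) f = (0:ℕ∞)}))
      = Q {f | cnt (Ioi 0) f ≠ ⊤} ∧
    Q {f | cnt (Ioi 0) f = (0:ℕ∞)}
      = Q {f | cnt (Ioi 0) f ≠ ⊤} / (∑' k : ℕ, (k : ℝ≥0∞) *
        (Q ({f | cnt univ f = (k:ℕ∞)} ∩ {f | cnt (Iio 0) f = (0:ℕ∞)})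
          / Q {f | cnt (Iio 0) f = (0:ℕ∞)})) := by
  classical
  have hcompl : Q (Pt 0)ᶜ = 0 := (prob_compl_eq_zero_iff (measurableSet_Pt 0)).mpr hQ0
  have hfull : ∀ A : Set X, Q (A ∩ Pt 0) = Q A := by
    intro A
    have h1 := measure_inter_add_diff (μ := Q) A (measurableSet_Pt 0)
    have h2 : Q (A \ Pt 0) = 0 := measure_mono_null (fun f hf => hf.2) hcompl
    rw [h2, add_zero] at h1
    exact h1
  -- step: Q({cnt univ = k} ∩ Pt 0) = k * Q({cnt univ = k} ∩ {cnt Iio0 = 0} ∩ Pt 0), k ≥ 1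
  have key2 : ∀ k : ℕ, 1 ≤ k →
      Q ({f | cnt univ f = (k:ℕ∞)} ∩ Pt 0)
        = (k:ℝ≥0∞) * Q ({f | cnt univ f = (k:ℕ∞)} ∩ {f | cnt (Iio 0) f = (0:ℕ∞)} ∩ Pt 0) := by
    intro k hk
    have hdecomp : {f | cnt univ f = (k:ℕ∞)} ∩ Pt 0
        = ⋃ j ∈ Finset.range k,
            ({f | cnt univ f = (k:ℕ∞)} ∩ {f | cnt (Iio 0) f = (j:ℕ∞)} ∩ Pt 0) := by
      apply Set.Subset.antisymm
      · rintro f ⟨h1, h2⟩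
        rw [mem_setOf_eq] at h1
        have hsplit : cnt univ f = cnt (Iio 0) f + (1 + cnt (Ioi 0) f) := by
          rw [cnt_split_univ f, cnt_split_Ici0 f, cnt_pt_one h2]
        have hne : cnt (Iio 0) f ≠ ⊤ := by
          intro htop
          rw [h1, htop, top_add] at hsplit
          exact (ENat.coe_ne_top k) hsplit
        obtain ⟨j, hj⟩ := WithTop.ne_top_iff_exists.mp hne
        have hle : (j:ℕ∞) + 1 ≤ (k:ℕ∞) := by
          rw [h1, ← hj] at hsplit
          rw [hsplit]
          exact add_le_add (le_refl _) le_self_add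
        have hjk : j + 1 ≤ k := by exact_mod_cast hle
        simp only [mem_iUnion]
        exact ⟨j, Finset.mem_range.mpr (by omega), ⟨⟨h1, hj.symm⟩, h2⟩⟩
      · intro f hf
        simp only [mem_iUnion] at hf
        obtain ⟨j, _, hf⟩ := hf
        exact ⟨hf.1.1, hf.2⟩
    have hmeas : ∀ j ∈ Finset.range k, MeasurableSet
        ({f | cnt univ f = (k:ℕ∞)} ∩ {f | cnt (Iio 0) f = (j:ℕ∞)} ∩ Pt 0) :=
      fun j _ => ((measurableSet_cntEq univ k).inter (measurableSet_cntEq _ j)).inter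
        (measurableSet_Pt 0)
    have hdisj : (↑(Finset.range k) : Set ℕ).PairwiseDisjoint
        (fun j => {f | cnt univ f = (k:ℕ∞)} ∩ {f | cnt (Iio 0) f = (j:ℕ∞)} ∩ Pt 0) := by
      intro j _ j' _ hne
      apply Set.disjoint_left.mpr
      rintro f ⟨⟨_, hfj⟩, _⟩ ⟨⟨_, hfj'⟩, _⟩
      rw [mem_setOf_eq] at hfj hfj'
      rw [hfj] at hfj'
      exact hne (by exact_mod_cast hfj')
    rw [hdecomp, measure_biUnion_finset hdisj hmeas]
    have hterm : ∀ j ∈ Finset.range k,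
        Q ({f | cnt univ f = (k:ℕ∞)} ∩ {f | cnt (Iio 0) f = (j:ℕ∞)} ∩ Pt 0)
          = Q ({f | cnt univ f = (k:ℕ∞)} ∩ {f | cnt (Iio 0) f = (0:ℕ∞)} ∩ Pt 0) := by
      intro j hjr
      rcases Nat.eq_zero_or_pos j with rfl | hj1
      · simp only [Nat.cast_zero]
      · have := keyE Q hM k j hj1 (by
          have := Finset.mem_range.mp hjr; omega)
        simpa only [Nat.cast_zero] using this
    rw [Finset.sum_congr rfl hterm, Finset.sum_const, Finset.card_range, nsmul_eq_mul]
  -- k = 0 slice is empty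
  have hzero : Q ({f | cnt univ f = ((0:ℕ):ℕ∞)} ∩ Pt 0) = 0 := by
    have hempty : {f : X | cnt univ f = ((0:ℕ):ℕ∞)} ∩ Pt 0 = (∅ : Set X) := by
      ext f
      simp only [mem_inter_iff, mem_setOf_eq, mem_empty_iff_false, iff_false, not_and, Pt]
      intro h1 h2
      rw [show ((0:ℕ):ℕ∞) = 0 from rfl, cnt_eq_zero] at h1
      have := h1 0 (mem_univ 0)
      rw [h2] at this
      simp at this
    rw [hempty, measure_empty]
  -- decomposition over k
  have hdecompk : {f : X | cnt univ f ≠ ⊤} ∩ Pt 0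
      = ⋃ k : ℕ, ({f | cnt univ f = (k:ℕ∞)} ∩ Pt 0) := by
    ext f
    constructor
    · rintro ⟨h1, h2⟩
      obtain ⟨k, hk⟩ := WithTop.ne_top_iff_exists.mp h1
      exact mem_iUnion.mpr ⟨k, hk.symm, h2⟩
    · intro hf
      obtain ⟨k, hk1, hk2⟩ := mem_iUnion.mp hf
      refine ⟨?_, hk2⟩
      rw [mem_setOf_eq, hk1]
      exact ENat.coe_ne_top k
  have hdisjk : Pairwise (Function.onFun Disjoint
      (fun k : ℕ => {f | cnt univ f = (k:ℕ∞)} ∩ Pt 0)) := by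
    intro k k' hne
    apply Set.disjoint_left.mpr
    rintro f ⟨hfk, _⟩ ⟨hfk', _⟩
    rw [mem_setOf_eq] at hfk hfk'
    rw [hfk] at hfk'
    exact hne (by exact_mod_cast hfk')
  have key3 : Q ({f : X | cnt univ f ≠ ⊤} ∩ Pt 0)
      = ∑' k : ℕ, Q ({f | cnt univ f = (k:ℕ∞)} ∩ Pt 0) := by
    rw [hdecompk]
    exact measure_iUnion hdisjk
      (fun k => (measurableSet_cntEq univ k).inter (measurableSet_Pt 0))
  -- the null event: infinitely many points to the left, finitely many to the right
  have keyCD' : ∀ j : ℕ,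
      Q ({f | cnt (Iio 0) f = ⊤} ∩ {f | cnt (Ioi 0) f = (j:ℕ∞)} ∩ Pt 0)
        = Q ({f | cnt (Iio 0) f = ⊤} ∩ {f | cnt (Ioi 0) f = (0:ℕ∞)} ∩ Pt 0) := by
    intro j
    rcases Nat.eq_zero_or_pos j with rfl | hj1
    · simp only [Nat.cast_zero]
    · have := keyCD Q hM j hj1
      simpa only [Nat.cast_zero] using this
  have hdecompN : {f : X | cnt (Iio 0) f = ⊤} ∩ {f : X | cnt (Ioi 0) f ≠ ⊤} ∩ Pt 0
      = ⋃ j : ℕ, ({f | cnt (Iio 0) f = ⊤} ∩ {f | cnt (Ioi 0) f = (j:ℕ∞)} ∩ Pt 0) := by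
    ext f
    constructor
    · rintro ⟨⟨h1, h2⟩, h3⟩
      obtain ⟨j, hj⟩ := WithTop.ne_top_iff_exists.mp h2
      exact mem_iUnion.mpr ⟨j, ⟨⟨h1, hj.symm⟩, h3⟩⟩
    · intro hf
      obtain ⟨j, hj⟩ := mem_iUnion.mp hf
      obtain ⟨⟨h1, h2⟩, h3⟩ := hj
      refine ⟨⟨h1, ?_⟩, h3⟩
      rw [mem_setOf_eq] at h2 ⊢
      rw [h2]
      exact ENat.coe_ne_top j
  have hdisjN : Pairwise (Function.onFun Disjoint
      (fun j : ℕ => {f | cnt (Iio 0) f = ⊤} ∩ {f | cnt (Ioi 0) f = (j:ℕ∞)} ∩ Pt 0)) := by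
    intro j j' hne
    apply Set.disjoint_left.mpr
    rintro f ⟨⟨_, hfj⟩, _⟩ ⟨⟨_, hfj'⟩, _⟩
    rw [mem_setOf_eq] at hfj hfj'
    rw [hfj] at hfj'
    exact hne (by exact_mod_cast hfj')
  have hNnull : Q ({f : X | cnt (Iio 0) f = ⊤} ∩ {f : X | cnt (Ioi 0) f ≠ ⊤} ∩ Pt 0) = 0 := by
    have hsumN : Q ({f : X | cnt (Iio 0) f = ⊤} ∩ {f : X | cnt (Ioi 0) f ≠ ⊤} ∩ Pt 0)
        = ∑' j : ℕ, Q ({f | cnt (Iio 0) f = ⊤} ∩ {f | cnt (Ioi 0) f = (j:ℕ∞)} ∩ Pt 0) := by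
      rw [hdecompN]
      exact measure_iUnion hdisjN (fun j =>
        ((measurableSet_cntTop _).inter (measurableSet_cntEq _ j)).inter (measurableSet_Pt 0))
    have hconst : ∀ j : ℕ,
        Q ({f | cnt (Iio 0) f = ⊤} ∩ {f | cnt (Ioi 0) f = (j:ℕ∞)} ∩ Pt 0)
          = Q ({f | cnt (Iio 0) f = ⊤} ∩ {f | cnt (Ioi 0) f = (0:ℕ∞)} ∩ Pt 0) := keyCD'
    have hQN : Q ({f : X | cnt (Iio 0) f = ⊤} ∩ {f : X | cnt (Ioi 0) f = (0:ℕ∞)} ∩ Pt 0) = 0 := by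
      by_contra hne
      have htop : (∑' _ : ℕ, Q ({f : X | cnt (Iio 0) f = ⊤}
          ∩ {f : X | cnt (Ioi 0) f = (0:ℕ∞)} ∩ Pt 0)) = ⊤ :=
        ENNReal.tsum_const_eq_top_of_ne_zero hne
      rw [tsum_congr hconst, htop] at hsumN
      exact (measure_ne_top Q _) hsumN
    rw [hsumN, tsum_congr hconst, hQN, tsum_zero]
  -- Q {Sp ≠ ⊤} = Q ({S ≠ ⊤} ∩ Pt 0)
  have key6 : Q {f : X | cnt (Ioi 0) f ≠ ⊤} = Q ({f : X | cnt univ f ≠ ⊤} ∩ Pt 0) := by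
    rw [← hfull {f : X | cnt (Ioi 0) f ≠ ⊤}]
    have hsplitset : {f : X | cnt (Ioi 0) f ≠ ⊤} ∩ Pt 0
        = ({f : X | cnt univ f ≠ ⊤} ∩ Pt 0)
          ∪ ({f : X | cnt (Iio 0) f = ⊤} ∩ {f : X | cnt (Ioi 0) f ≠ ⊤} ∩ Pt 0) := by
      ext f
      constructor
      · rintro ⟨h1, h2⟩
        by_cases hio : cnt (Iio 0) f = ⊤
        · exact Or.inr ⟨⟨hio, h1⟩, h2⟩
        · exact Or.inl ⟨(cnt_univ_ne_top_iff f).mpr ⟨hio, h1⟩, h2⟩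
      · rintro (⟨h1, h2⟩ | ⟨⟨h1, h2⟩, h3⟩)
        · exact ⟨((cnt_univ_ne_top_iff f).mp h1).2, h2⟩
        · exact ⟨h2, h3⟩
    have hdisj2 : Disjoint ({f : X | cnt univ f ≠ ⊤} ∩ Pt 0)
        ({f : X | cnt (Iio 0) f = ⊤} ∩ {f : X | cnt (Ioi 0) f ≠ ⊤} ∩ Pt 0) := by
      apply Set.disjoint_left.mpr
      rintro f ⟨h1, _⟩ ⟨⟨h2, _⟩, _⟩
      exact ((cnt_univ_ne_top_iff f).mp h1).1 h2
    have hmeas2 : MeasurableSet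
        ({f : X | cnt (Iio 0) f = ⊤} ∩ {f : X | cnt (Ioi 0) f ≠ ⊤} ∩ Pt 0) :=
      ((measurableSet_cntTop _).inter (measurableSet_cntNeTop _)).inter (measurableSet_Pt 0)
    rw [hsplitset, measure_union hdisj2 hmeas2, hNnull, add_zero]
  -- assemble
  set b := Q {f : X | cnt (Iio 0) f = (0:ℕ∞)} with hbdef
  set th := Q {f : X | cnt (Ioi 0) f = (0:ℕ∞)} with hthdef
  have hba : b = th := hsym
  have hbne0 : b ≠ 0 := by rw [hba]; exact hθ.ne'
  have hbnetop : b ≠ ⊤ := measure_ne_top Q _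
  have hm : ∀ k : ℕ, (k:ℝ≥0∞) * Q ({f | cnt univ f = (k:ℕ∞)} ∩ {f | cnt (Iio 0) f = (0:ℕ∞)})
      = Q ({f | cnt univ f = (k:ℕ∞)} ∩ Pt 0) := by
    intro k
    rcases Nat.eq_zero_or_pos k with rfl | hk1
    · rw [hzero]
      simp
    · rw [← hfull ({f | cnt univ f = (k:ℕ∞)} ∩ {f | cnt (Iio 0) f = (0:ℕ∞)})]
      exact (key2 k hk1).symm
  have hP : (∑' k : ℕ, (k:ℝ≥0∞) *
      Q ({f | cnt univ f = (k:ℕ∞)} ∩ {f | cnt (Iio 0) f = (0:ℕ∞)}))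
      = Q {f : X | cnt (Ioi 0) f ≠ ⊤} := by
    rw [tsum_congr hm, ← key3, ← key6]
  have hTeq : (∑' k : ℕ, (k:ℝ≥0∞) *
      (Q ({f | cnt univ f = (k:ℕ∞)} ∩ {f | cnt (Iio 0) f = (0:ℕ∞)}) / b))
      = Q {f : X | cnt (Ioi 0) f ≠ ⊤} * b⁻¹ := by
    rw [← hP, ← ENNReal.tsum_mul_right]
    apply tsum_congr
    intro k
    rw [div_eq_mul_inv, mul_assoc]
  have hfirst : th * (∑' k : ℕ, (k:ℝ≥0∞) *
      (Q ({f | cnt univ f = (k:ℕ∞)} ∩ {f | cnt (Iio 0) f = (0:ℕ∞)}) / b))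
      = Q {f : X | cnt (Ioi 0) f ≠ ⊤} := by
    rw [hTeq, ← hba]
    calc b * (Q {f : X | cnt (Ioi 0) f ≠ ⊤} * b⁻¹)
        = Q {f : X | cnt (Ioi 0) f ≠ ⊤} * (b * b⁻¹) := by ring
      _ = Q {f : X | cnt (Ioi 0) f ≠ ⊤} := by
          rw [ENNReal.mul_inv_cancel hbne0 hbnetop, mul_one]
  refine ⟨hfirst, ?_⟩
  have hPne0 : Q {f : X | cnt (Ioi 0) f ≠ ⊤} ≠ 0 := by
    have hsub : {f : X | cnt (Ioi 0) f = (0:ℕ∞)} ⊆ {f : X | cnt (Ioi 0) f ≠ ⊤} := by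
      intro f hf
      rw [mem_setOf_eq] at hf ⊢
      rw [hf]
      simp
    have hle := measure_mono (μ := Q) hsub
    intro h0
    rw [h0] at hle
    exact hθ.ne' (le_antisymm hle zero_le)
  have hTne0 : (∑' k : ℕ, (k:ℝ≥0∞) *
      (Q ({f | cnt univ f = (k:ℕ∞)} ∩ {f | cnt (Iio 0) f = (0:ℕ∞)}) / b)) ≠ 0 := by
    rw [hTeq]
    exact mul_ne_zero hPne0 (ENNReal.inv_ne_zero.mpr hbnetop)
  have hTnetop : (∑' k : ℕ, (k:ℝ≥0∞) *
      (Q ({f | cnt univ f = (k:ℕ∞)} ∩ {f | cnt (Iio 0) f = (0:ℕ∞)}) / b)) ≠ ⊤ := by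
    rw [hTeq]
    exact ENNReal.mul_ne_top (measure_ne_top Q _) (ENNReal.inv_ne_top.mpr hbne0)
  exact (ENNReal.eq_div_iff hTne0 hTnetop).mpr (by rw [mul_comm]; exact hfirst)


lemma cylword_shift {W : Type*} (g : ℤ → W → Bool) (F : Finset ℤ) (ε : ℤ → Bool) (k : ℤ) :
    {ω | ∀ t ∈ F, g (t + k) ω = ε t}
      = {ω | ∀ s ∈ F.image (· + k), g s ω = ε (s - k)} := by
  ext ω
  simp only [mem_setOf_eq]
  constructor
  · intro h s hs
    obtain ⟨t, ht, rfl⟩ := Finset.mem_image.mp hs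
    rw [show t + k - k = t by ring]
    exact h t ht
  · intro h t ht
    have := h (t + k) (Finset.mem_image_of_mem _ ht)
    rw [show t + k - k = t by ring] at this
    exact this

lemma measurableSet_word {W : Type*} [MeasurableSpace W] (g : ℤ → W → Bool)
    (hg : ∀ t, Measurable (g t)) (F : Finset ℤ) (ε : ℤ → Bool) :
    MeasurableSet {ω | ∀ t ∈ F, g t ω = ε t} := by
  have h : {ω | ∀ t ∈ F, g t ω = ε t} = ⋂ t ∈ F, {ω | g t ω = ε t} := by
    ext ω; simp
  rw [h]
  exact MeasurableSet.biInter F.countable_toSet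
    fun t _ => hg t (measurableSet_singleton (ε t))

lemma measurableSet_cntEq0 (S : Set ℤ) : MeasurableSet {f : X | cnt S f = (0:ℕ∞)} := by
  simpa only [Nat.cast_zero] using measurableSet_cntEq S 0

end ClusterThm

open ClusterThm

/-- Theorem 4.2(b), Equation (4.8): under Assumption 1, if `θ = P(S₊ⁱ = 0) > 0`,
then `θ = P(S₊ⁱ < ∞) / E(Sᵗ)`, where `E(Sᵗ) = Σ_{k≥1} k·π_k` is the expected
typical cluster size; equivalently `θ · E(Sᵗ) = P(S₊ⁱ < ∞)`. -/


theorem theta_eq_finite_over_typical_mean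
    {Ω : Type*} [MeasurableSpace Ω] (P : Measure Ω) [IsProbabilityMeasure P]
    (I : ℤ → Ω → Bool) (hI : ∀ t, Measurable (I t))
    {Ωn : ℕ → Type*} [∀ n, MeasurableSpace (Ωn n)]
    (Pn : ∀ n, Measure (Ωn n)) (hPn : ∀ n, IsProbabilityMeasure (Pn n))
    (In : ∀ n, ℤ → Ωn n → Bool) (hIn : ∀ n t, Measurable (In n t))
    -- `P(I₀ⁿ = 1) > 0` for all `n`
    (hpos : ∀ n, 0 < Pn n {ω | In n 0 ω = true})
    -- stationarity of each `(Iₜⁿ)ₜ`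
    (hstat : ∀ n (F : Finset ℤ) (ε : ℤ → Bool) (k : ℤ),
      Pn n {ω | ∀ t ∈ F, In n t ω = ε t} = Pn n {ω | ∀ t ∈ F, In n (t + k) ω = ε t})
    -- convergence of the conditional finite-dimensional distributions
    (hconv : ∀ (F : Finset ℤ) (ε : ℤ → Bool),
      Tendsto (fun n =>
          Pn n ({ω | ∀ t ∈ F, In n t ω = ε t} ∩ {ω | In n 0 ω = true})
            / Pn n {ω | In n 0 ω = true}) atTop
        (nhds (P {ω | ∀ t ∈ F, I t ω = ε t})))

    (hθ : 0 < P {ω | SplusFn I ω = 0}) :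
    (P {ω | SplusFn I ω = 0}) * (∑' k : ℕ, (k : ℝ≥0∞) * (P ({ω | SiFn I ω = ((k : ℕ) : ℕ∞)} ∩ {ω | SminusFn I ω = 0}) / P {ω | SminusFn I ω = 0})) = P {ω | SplusFn I ω ≠ ⊤}
    ∧ (P {ω | SplusFn I ω = 0}) = P {ω | SplusFn I ω ≠ ⊤} / (∑' k : ℕ, (k : ℝ≥0∞) * (P ({ω | SiFn I ω = ((k : ℕ) : ℕ∞)} ∩ {ω | SminusFn I ω = 0}) / P {ω | SminusFn I ω = 0})) := by
  classical
  set φ : Ω → X := fun ω t => I t ω with hφ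
  have hφm : Measurable φ := measurable_pi_lambda _ fun t => hI t
  set Q : Measure X := P.map φ with hQdef
  haveI hQprob : IsProbabilityMeasure Q := Measure.isProbabilityMeasure_map hφm.aemeasurable
  have hQapp : ∀ A : Set X, MeasurableSet A → Q A = P (φ ⁻¹' A) :=
    fun A hA => Measure.map_apply hφm hA
  have hpre : ∀ (F : Finset ℤ) (ε : ℤ → Bool),
      φ ⁻¹' (cyl F ε) = {ω | ∀ t ∈ F, I t ω = ε t} := by
    intro F ε
    ext ω
    simp only [mem_preimage, mem_setOf_eq, cyl, hφ]
  have hlim : ∀ (F : Finset ℤ) (ε : ℤ → Bool),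
      Tendsto (fun n =>
          Pn n ({ω | ∀ t ∈ F, In n t ω = ε t} ∩ {ω | In n 0 ω = true})
            / Pn n {ω | In n 0 ω = true}) atTop (nhds (Q (cyl F ε))) := by
    intro F ε
    have h1 := hconv F ε
    rw [← hpre F ε, ← hQapp _ (measurableSet_cyl F ε)] at h1
    exact h1
  have hden : ∀ n, Pn n {ω | In n 0 ω = true} ≠ 0 := fun n => (hpos n).ne'
  have hdentop : ∀ n, Pn n {ω | In n 0 ω = true} ≠ ⊤ := fun n => measure_ne_top _ _
  -- `Q (Pt 0) = 1`
  have hQ0 : Q (Pt 0) = 1 := by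
    have h1 := hlim {0} (fun _ => true)
    have h2 : ∀ n, Pn n ({ω | ∀ t ∈ ({0}:Finset ℤ), In n t ω = (fun _ => true) t}
        ∩ {ω | In n 0 ω = true}) / Pn n {ω | In n 0 ω = true} = 1 := by
      intro n
      have hseteq : {ω | ∀ t ∈ ({0}:Finset ℤ), In n t ω = (fun _ => true) t}
          ∩ {ω | In n 0 ω = true} = {ω | In n 0 ω = true} := by
        ext ω; simp
      rw [hseteq]
      exact ENNReal.div_self (hden n) (hdentop n)
    have h3 := tendsto_nhds_unique ((tendsto_congr h2).mp h1) tendsto_const_nhds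
    have hcylPt : cyl {0} (fun _ => true) = Pt 0 := by
      ext f; simp [cyl, Pt]
    rw [← hcylPt, h3]
  have hcompl : Q (Pt 0)ᶜ = 0 := (prob_compl_eq_zero_iff (measurableSet_Pt 0)).mpr hQ0
  have hfullQ : ∀ A : Set X, Q (A ∩ Pt 0) = Q A := by
    intro A
    have h1 := measure_inter_add_diff (μ := Q) A (measurableSet_Pt 0)
    have h2 : Q (A \ Pt 0) = 0 := measure_mono_null (fun f hf => hf.2) hcompl
    rw [h2, add_zero] at h1
    exact h1
  -- Mecke identity on cylinders
  have hMcyl : ∀ (F : Finset ℤ) (ε : ℤ → Bool) (c : ℤ),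
      Q (cyl F ε ∩ Pt c) = Q (shift c ⁻¹' cyl F ε ∩ Pt (-c)) := by
    intro F ε c
    by_cases hcF : c ∈ F ∧ ε c = false
    · have hL : cyl F ε ∩ Pt c = (∅ : Set X) := by
        apply eq_empty_iff_forall_notMem.mpr
        rintro f ⟨h1, h2⟩
        have h3 : f c = ε c := h1 c hcF.1
        have h4 : f c = true := h2
        rw [hcF.2, h4] at h3
        simp at h3
      have hRsub : shift c ⁻¹' cyl F ε ∩ Pt (-c) ⊆ (Pt 0)ᶜ := by
        rintro f ⟨h1, -⟩ h0
        have h3 : f (c - c) = ε c := h1 c hcF.1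
        rw [sub_self] at h3
        have h4 : f 0 = true := h0
        rw [hcF.2, h4] at h3
        simp at h3
      rw [hL, measure_empty]
      exact (measure_mono_null hRsub hcompl).symm
    · by_cases h0F : 0 ∈ F ∧ ε 0 = false
      · have hLsub : cyl F ε ∩ Pt c ⊆ (Pt 0)ᶜ := by
          rintro f ⟨h1, -⟩ h0
          have h3 : f 0 = ε 0 := h1 0 h0F.1
          have h4 : f 0 = true := h0
          rw [h0F.2, h4] at h3
          simp at h3
        have hR : shift c ⁻¹' cyl F ε ∩ Pt (-c) = (∅ : Set X) := by
          apply eq_empty_iff_forall_notMem.mpr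
          rintro f ⟨h1, h2⟩
          have h3 : f (0 - c) = ε 0 := h1 0 h0F.1
          rw [zero_sub] at h3
          have h4 : f (-c) = true := h2
          rw [h0F.2, h4] at h3
          simp at h3
        rw [hR, measure_empty]
        exact measure_mono_null hLsub hcompl
      · have hc : c ∈ F → ε c = true := by
          intro h
          cases hεc : ε c with
          | false => exact absurd ⟨h, hεc⟩ hcF
          | true => rfl
        have h0 : 0 ∈ F → ε 0 = true := by
          intro h
          cases hε0 : ε 0 with
          | false => exact absurd ⟨h, hε0⟩ h0F
          | true => rfl
        set G : Finset ℤ := insert 0 (insert c F) with hG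
        set δ : ℤ → Bool := fun t => if t = 0 ∨ t = c then true else ε t with hδ
        have hδ0 : δ 0 = true := if_pos (Or.inl rfl)
        have hδc : δ c = true := if_pos (Or.inr rfl)
        have hagree : ∀ t ∈ F, δ t = ε t := by
          intro t ht
          by_cases h : t = 0 ∨ t = c
          · rcases h with rfl | rfl
            · rw [hδ0, h0 ht]
            · rw [hδc, hc ht]
          · exact if_neg h
        have hclaim1 : cyl F ε ∩ Pt c ∩ Pt 0 = cyl G δ := by
          ext f
          constructor
          · rintro ⟨⟨h1, h2⟩, h3⟩
            intro t ht
            rcases Finset.mem_insert.mp ht with rfl | ht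
            · rw [hδ0]; exact h3
            rcases Finset.mem_insert.mp ht with rfl | ht
            · rw [hδc]; exact h2
            · rw [hagree t ht]; exact h1 t ht
          · intro h
            have hf0 : f 0 = true := by
              have := h 0 (Finset.mem_insert_self 0 _)
              rw [hδ0] at this; exact this
            have hfc : f c = true := by
              have := h c (Finset.mem_insert_of_mem (Finset.mem_insert_self c F))
              rw [hδc] at this; exact this
            refine ⟨⟨?_, hfc⟩, hf0⟩
            intro t ht
            have := h t (Finset.mem_insert_of_mem (Finset.mem_insert_of_mem ht))
            rw [hagree t ht] at this; exact this
        set G' : Finset ℤ := G.image (· + (-c)) with hG'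
        set δ' : ℤ → Bool := fun s => δ (s - (-c)) with hδ'
        have h0G' : (0:ℤ) ∈ G' := by
          rw [hG']
          exact Finset.mem_image.mpr
            ⟨c, Finset.mem_insert_of_mem (Finset.mem_insert_self c F), by ring⟩
        have hδ'0 : δ' 0 = true := by
          rw [hδ']
          simp only []
          rw [show (0:ℤ) - -c = c by ring]
          exact hδc
        have hseq : ∀ n, Pn n ({ω | ∀ t ∈ G, In n t ω = δ t} ∩ {ω | In n 0 ω = true})
              / Pn n {ω | In n 0 ω = true}
            = Pn n ({ω | ∀ t ∈ G', In n t ω = δ' t} ∩ {ω | In n 0 ω = true})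
              / Pn n {ω | In n 0 ω = true} := by
          intro n
          congr 1
          have s1 : {ω | ∀ t ∈ G, In n t ω = δ t} ∩ {ω | In n 0 ω = true}
              = {ω | ∀ t ∈ G, In n t ω = δ t} := by
            apply inter_eq_left.mpr
            intro ω hω
            have := hω 0 (Finset.mem_insert_self 0 _)
            rw [hδ0] at this; exact this
          have s4 : {ω | ∀ t ∈ G', In n t ω = δ' t} ∩ {ω | In n 0 ω = true}
              = {ω | ∀ t ∈ G', In n t ω = δ' t} := by
            apply inter_eq_left.mpr
            intro ω hω
            have := hω 0 h0G'
            rw [hδ'0] at this; exact this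
          rw [s1, s4]
          have s2 := hstat n G δ (-c)
          have s3 : {ω | ∀ t ∈ G, In n (t + -c) ω = δ t}
              = {ω | ∀ s ∈ G', In n s ω = δ' s} := by
            rw [cylword_shift (In n) G δ (-c)]
          rw [s2, s3]
        have hQGG' := tendsto_nhds_unique (hlim G δ) ((tendsto_congr hseq).mpr (hlim G' δ'))
        have hclaim2 : cyl G' δ' = shift c ⁻¹' cyl F ε ∩ Pt (-c) ∩ Pt 0 := by
          ext f
          constructor
          · intro h
            have key : ∀ t ∈ G, f (t + -c) = δ t := by
              intro t ht
              have := h (t + -c) (Finset.mem_image_of_mem _ ht)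
              simp only [hδ'] at this
              rw [show t + -c - -c = t by ring] at this
              exact this
            refine ⟨⟨?_, ?_⟩, ?_⟩
            · intro t ht
              have := key t (Finset.mem_insert_of_mem (Finset.mem_insert_of_mem ht))
              rw [hagree t ht] at this
              rw [show t + -c = t - c by ring] at this
              exact this
            · have := key 0 (Finset.mem_insert_self 0 _)
              rw [hδ0] at this
              rw [show (0:ℤ) + -c = -c by ring] at this
              exact this
            · have := key c (Finset.mem_insert_of_mem (Finset.mem_insert_self c F))
              rw [hδc] at this
              rw [show c + -c = (0:ℤ) by ring] at this
              exact this
          · rintro ⟨⟨h1, h2⟩, h3⟩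
            intro s hs
            obtain ⟨t, ht, rfl⟩ := Finset.mem_image.mp hs
            simp only [hδ']
            rw [show t + -c - -c = t by ring]
            rcases Finset.mem_insert.mp ht with rfl | ht
            · rw [hδ0, show (0:ℤ) + -c = -c by ring]; exact h2
            rcases Finset.mem_insert.mp ht with ht2 | ht
            · rw [ht2, hδc, show c + -c = (0:ℤ) by ring]; exact h3
            · rw [hagree t ht, show t + -c = t - c by ring]; exact h1 t ht
        calc Q (cyl F ε ∩ Pt c) = Q (cyl F ε ∩ Pt c ∩ Pt 0) := (hfullQ _).symm
          _ = Q (cyl G δ) := by rw [hclaim1]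
          _ = Q (cyl G' δ') := hQGG'
          _ = Q (shift c ⁻¹' cyl F ε ∩ Pt (-c) ∩ Pt 0) := by rw [hclaim2]
          _ = Q (shift c ⁻¹' cyl F ε ∩ Pt (-c)) := hfullQ _
  -- extension of the Mecke identity to all measurable sets
  have hM : ∀ (c : ℤ) (A : Set X), MeasurableSet A →
      Q (A ∩ Pt c) = Q (shift c ⁻¹' A ∩ Pt (-c)) := by
    intro c A hA
    haveI : IsFiniteMeasure (Q.restrict (Pt c)) := inferInstance
    have hμν : Q.restrict (Pt c) = (Q.restrict (Pt (-c))).map (shift c) := by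
      apply ext_cyl
      intro F ε
      rw [Measure.restrict_apply (measurableSet_cyl F ε),
        Measure.map_apply (measurable_shift c) (measurableSet_cyl F ε),
        Measure.restrict_apply (measurable_shift c (measurableSet_cyl F ε))]
      exact hMcyl F ε c
    calc Q (A ∩ Pt c) = Q.restrict (Pt c) A := (Measure.restrict_apply hA).symm
      _ = (Q.restrict (Pt (-c))).map (shift c) A := by rw [hμν]
      _ = Q.restrict (Pt (-c)) (shift c ⁻¹' A) := Measure.map_apply (measurable_shift c) hA
      _ = Q (shift c ⁻¹' A ∩ Pt (-c)) := Measure.restrict_apply (measurable_shift c hA)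
  -- symmetry of the extremal index: Q(S₋ = 0) = Q(S₊ = 0)
  set εf : ℤ → Bool := fun _ => false with hεf
  have hsym : Q {f : X | cnt (Iio 0) f = (0:ℕ∞)} = Q {f : X | cnt (Ioi 0) f = (0:ℕ∞)} := by
    have hnum : ∀ (n m : ℕ),
        Pn n ({ω | ∀ t ∈ Finset.Icc (1:ℤ) (m:ℤ), In n t ω = εf t} ∩ {ω | In n 0 ω = true})
          = Pn n ({ω | ∀ t ∈ Finset.Icc (-(m:ℤ)) (-1:ℤ), In n t ω = εf t}
              ∩ {ω | In n 0 ω = true}) := by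
      intro n m
      have t1 : Pn n {ω | ∀ t ∈ Finset.Icc (1:ℤ) (m:ℤ), In n t ω = εf t}
          = Pn n {ω | ∀ t ∈ Finset.Icc (0:ℤ) ((m:ℤ)-1), In n t ω = εf t} := by
        rw [hstat n (Finset.Icc (1:ℤ) (m:ℤ)) εf (-1)]
        congr 1
        ext ω
        simp only [mem_setOf_eq, hεf]
        constructor
        · intro h s hs
          rw [Finset.mem_Icc] at hs
          have := h (s + 1) (by rw [Finset.mem_Icc]; omega)
          rw [show s + 1 + -1 = s by ring] at this
          exact this
        · intro h t ht
          rw [Finset.mem_Icc] at ht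
          exact h (t + -1) (by rw [Finset.mem_Icc]; omega)
      have t2 : Pn n {ω | ∀ t ∈ Finset.Icc (-(m:ℤ)) (-1:ℤ), In n t ω = εf t}
          = Pn n {ω | ∀ t ∈ Finset.Icc (0:ℤ) ((m:ℤ)-1), In n t ω = εf t} := by
        rw [hstat n (Finset.Icc (-(m:ℤ)) (-1:ℤ)) εf (m:ℤ)]
        congr 1
        ext ω
        simp only [mem_setOf_eq, hεf]
        constructor
        · intro h s hs
          rw [Finset.mem_Icc] at hs
          have := h (s - (m:ℤ)) (by rw [Finset.mem_Icc]; omega)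
          rw [show s - (m:ℤ) + (m:ℤ) = s by ring] at this
          exact this
        · intro h t ht
          rw [Finset.mem_Icc] at ht
          exact h (t + (m:ℤ)) (by rw [Finset.mem_Icc]; omega)
      have t3 : Pn n {ω | ∀ t ∈ Finset.Icc (-(m:ℤ)) (0:ℤ), In n t ω = εf t}
          = Pn n {ω | ∀ t ∈ Finset.Icc (0:ℤ) (m:ℤ), In n t ω = εf t} := by
        rw [hstat n (Finset.Icc (-(m:ℤ)) (0:ℤ)) εf (m:ℤ)]
        congr 1
        ext ω
        simp only [mem_setOf_eq, hεf]
        constructor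
        · intro h s hs
          rw [Finset.mem_Icc] at hs
          have := h (s - (m:ℤ)) (by rw [Finset.mem_Icc]; omega)
          rw [show s - (m:ℤ) + (m:ℤ) = s by ring] at this
          exact this
        · intro h t ht
          rw [Finset.mem_Icc] at ht
          exact h (t + (m:ℤ)) (by rw [Finset.mem_Icc]; omega)
      have d1 : Pn n {ω | ∀ t ∈ Finset.Icc (1:ℤ) (m:ℤ), In n t ω = εf t}
          = Pn n ({ω | ∀ t ∈ Finset.Icc (1:ℤ) (m:ℤ), In n t ω = εf t}
              ∩ {ω | In n 0 ω = true})
            + Pn n {ω | ∀ t ∈ Finset.Icc (0:ℤ) (m:ℤ), In n t ω = εf t} := by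
        have hsplit : {ω | ∀ t ∈ Finset.Icc (1:ℤ) (m:ℤ), In n t ω = εf t}
            = ({ω | ∀ t ∈ Finset.Icc (1:ℤ) (m:ℤ), In n t ω = εf t}
                ∩ {ω | In n 0 ω = true})
              ∪ {ω | ∀ t ∈ Finset.Icc (0:ℤ) (m:ℤ), In n t ω = εf t} := by
          ext ω
          simp only [mem_union, mem_inter_iff, mem_setOf_eq, hεf]
          constructor
          · intro h
            cases h0ω : In n 0 ω with
            | true => exact Or.inl ⟨h, rfl⟩
            | false =>
              refine Or.inr fun t ht => ?_
              rw [Finset.mem_Icc] at ht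
              rcases eq_or_lt_of_le ht.1 with heq | hlt
              · rw [← heq]; exact h0ω
              · exact h t (by rw [Finset.mem_Icc]; omega)
          · rintro (⟨h, -⟩ | h)
            · exact h
            · intro t ht
              rw [Finset.mem_Icc] at ht
              exact h t (by rw [Finset.mem_Icc]; omega)
        have hdisj : Disjoint ({ω | ∀ t ∈ Finset.Icc (1:ℤ) (m:ℤ), In n t ω = εf t}
              ∩ {ω | In n 0 ω = true})
            {ω | ∀ t ∈ Finset.Icc (0:ℤ) (m:ℤ), In n t ω = εf t} := by
          apply Set.disjoint_left.mpr
          rintro ω ⟨-, h2⟩ h3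
          have h4 := h3 0 (by rw [Finset.mem_Icc]; omega)
          have h5 : In n 0 ω = true := h2
          rw [h5, hεf] at h4
          simp at h4
        conv_lhs => rw [hsplit]
        exact measure_union hdisj (measurableSet_word (In n) (hIn n) _ _)
      have d2 : Pn n {ω | ∀ t ∈ Finset.Icc (-(m:ℤ)) (-1:ℤ), In n t ω = εf t}
          = Pn n ({ω | ∀ t ∈ Finset.Icc (-(m:ℤ)) (-1:ℤ), In n t ω = εf t}
              ∩ {ω | In n 0 ω = true})
            + Pn n {ω | ∀ t ∈ Finset.Icc (-(m:ℤ)) (0:ℤ), In n t ω = εf t} := by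
        have hsplit : {ω | ∀ t ∈ Finset.Icc (-(m:ℤ)) (-1:ℤ), In n t ω = εf t}
            = ({ω | ∀ t ∈ Finset.Icc (-(m:ℤ)) (-1:ℤ), In n t ω = εf t}
                ∩ {ω | In n 0 ω = true})
              ∪ {ω | ∀ t ∈ Finset.Icc (-(m:ℤ)) (0:ℤ), In n t ω = εf t} := by
          ext ω
          simp only [mem_union, mem_inter_iff, mem_setOf_eq, hεf]
          constructor
          · intro h
            cases h0ω : In n 0 ω with
            | true => exact Or.inl ⟨h, rfl⟩
            | false =>
              refine Or.inr fun t ht => ?_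
              rw [Finset.mem_Icc] at ht
              rcases eq_or_lt_of_le ht.2 with heq | hlt
              · rw [heq]; exact h0ω
              · exact h t (by rw [Finset.mem_Icc]; omega)
          · rintro (⟨h, -⟩ | h)
            · exact h
            · intro t ht
              rw [Finset.mem_Icc] at ht
              exact h t (by rw [Finset.mem_Icc]; omega)
        have hdisj : Disjoint ({ω | ∀ t ∈ Finset.Icc (-(m:ℤ)) (-1:ℤ), In n t ω = εf t}
              ∩ {ω | In n 0 ω = true})
            {ω | ∀ t ∈ Finset.Icc (-(m:ℤ)) (0:ℤ), In n t ω = εf t} := by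
          apply Set.disjoint_left.mpr
          rintro ω ⟨-, h2⟩ h3
          have h4 := h3 0 (by rw [Finset.mem_Icc]; omega)
          have h5 : In n 0 ω = true := h2
          rw [h5, hεf] at h4
          simp at h4
        conv_lhs => rw [hsplit]
        exact measure_union hdisj (measurableSet_word (In n) (hIn n) _ _)
      have hwt : Pn n {ω | ∀ t ∈ Finset.Icc (0:ℤ) (m:ℤ), In n t ω = εf t} ≠ ⊤ :=
        measure_ne_top _ _
      have chain : Pn n ({ω | ∀ t ∈ Finset.Icc (1:ℤ) (m:ℤ), In n t ω = εf t}
              ∩ {ω | In n 0 ω = true})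
            + Pn n {ω | ∀ t ∈ Finset.Icc (0:ℤ) (m:ℤ), In n t ω = εf t}
          = Pn n ({ω | ∀ t ∈ Finset.Icc (-(m:ℤ)) (-1:ℤ), In n t ω = εf t}
              ∩ {ω | In n 0 ω = true})
            + Pn n {ω | ∀ t ∈ Finset.Icc (0:ℤ) (m:ℤ), In n t ω = εf t} := by
        rw [← d1, t1, ← t2, d2, t3]
      rw [add_comm (Pn n _) (Pn n {ω | ∀ t ∈ Finset.Icc (0:ℤ) (m:ℤ), In n t ω = εf t}),
        add_comm (Pn n _) (Pn n {ω | ∀ t ∈ Finset.Icc (0:ℤ) (m:ℤ), In n t ω = εf t})] at chain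
      exact (ENNReal.add_right_inj hwt).mp chain
    have hcylm : ∀ m : ℕ, Q (cyl (Finset.Icc (1:ℤ) (m:ℤ)) εf)
        = Q (cyl (Finset.Icc (-(m:ℤ)) (-1:ℤ)) εf) := by
      intro m
      exact tendsto_nhds_unique (hlim (Finset.Icc (1:ℤ) (m:ℤ)) εf)
        ((tendsto_congr (fun n => by rw [hnum n m])).mpr
          (hlim (Finset.Icc (-(m:ℤ)) (-1:ℤ)) εf))
    have hplus : {f : X | cnt (Ioi 0) f = (0:ℕ∞)}
        = ⋂ m : ℕ, cyl (Finset.Icc (1:ℤ) (m:ℤ)) εf := by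
      ext f
      simp only [mem_setOf_eq, mem_iInter]
      rw [cnt_eq_zero]
      constructor
      · intro h m t ht
        rw [Finset.mem_Icc] at ht
        rw [hεf]
        exact h t (by rw [mem_Ioi]; omega)
      · intro h t ht
        rw [mem_Ioi] at ht
        have := h t.toNat t (by rw [Finset.mem_Icc]; omega)
        rw [hεf] at this
        exact this
    have hminus : {f : X | cnt (Iio 0) f = (0:ℕ∞)}
        = ⋂ m : ℕ, cyl (Finset.Icc (-(m:ℤ)) (-1:ℤ)) εf := by
      ext f
      simp only [mem_setOf_eq, mem_iInter]
      rw [cnt_eq_zero]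
      constructor
      · intro h m t ht
        rw [Finset.mem_Icc] at ht
        rw [hεf]
        exact h t (by rw [mem_Iio]; omega)
      · intro h t ht
        rw [mem_Iio] at ht
        have := h (-t).toNat t (by rw [Finset.mem_Icc]; omega)
        rw [hεf] at this
        exact this
    have hmono_p : Antitone (fun m : ℕ => cyl (Finset.Icc (1:ℤ) (m:ℤ)) εf) := by
      intro m m' hmm f hf t ht
      apply hf t
      rw [Finset.mem_Icc] at ht ⊢
      omega
    have hmono_m : Antitone (fun m : ℕ => cyl (Finset.Icc (-(m:ℤ)) (-1:ℤ)) εf) := by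
      intro m m' hmm f hf t ht
      apply hf t
      rw [Finset.mem_Icc] at ht ⊢
      omega
    have hlim_p := tendsto_measure_iInter_atTop (μ := Q)
      (fun m => (measurableSet_cyl _ _).nullMeasurableSet) hmono_p ⟨0, measure_ne_top _ _⟩
    have hlim_m := tendsto_measure_iInter_atTop (μ := Q)
      (fun m => (measurableSet_cyl _ _).nullMeasurableSet) hmono_m ⟨0, measure_ne_top _ _⟩
    have huniq := tendsto_nhds_unique hlim_p
      ((tendsto_congr (fun m => hcylm m)).mpr hlim_m)
    rw [hplus, hminus]
    exact huniq.symm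
  -- transfer to the original space
  have heqp : ∀ ω, cnt (Ioi 0) (φ ω) = SplusFn I ω := by
    intro ω
    simp only [cnt, SplusFn]
    congr 1
  have heqm : ∀ ω, cnt (Iio 0) (φ ω) = SminusFn I ω := by
    intro ω
    simp only [cnt, SminusFn]
    congr 1
  have hequ : ∀ ω, cnt univ (φ ω) = SiFn I ω := by
    intro ω
    simp only [cnt, SiFn]
    congr 1
    ext t
    simp only [mem_setOf_eq, mem_univ, true_and, hφ]
  have hA : Q {f : X | cnt (Ioi 0) f = (0:ℕ∞)} = P {ω | SplusFn I ω = 0} := by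
    rw [hQapp _ (measurableSet_cntEq0 (Ioi 0))]
    congr 1
  have hB : Q {f : X | cnt (Iio 0) f = (0:ℕ∞)} = P {ω | SminusFn I ω = 0} := by
    rw [hQapp _ (measurableSet_cntEq0 (Iio 0))]
    congr 1
  have hD : Q {f : X | cnt (Ioi 0) f ≠ ⊤} = P {ω | SplusFn I ω ≠ ⊤} := by
    rw [hQapp _ (measurableSet_cntNeTop (Ioi 0))]
    congr 1
  have hC : ∀ k : ℕ,
      Q ({f : X | cnt univ f = (k:ℕ∞)} ∩ {f : X | cnt (Iio 0) f = (0:ℕ∞)})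
        = P ({ω | SiFn I ω = ((k:ℕ):ℕ∞)} ∩ {ω | SminusFn I ω = 0}) := by
    intro k
    rw [hQapp _ ((measurableSet_cntEq univ k).inter (measurableSet_cntEq0 (Iio 0)))]
    congr 1
    ext ω
    simp only [mem_preimage, mem_inter_iff, mem_setOf_eq, hequ ω, heqm ω]
  have hθ' : 0 < Q {f : X | cnt (Ioi 0) f = (0:ℕ∞)} := by rw [hA]; exact hθ
  obtain ⟨m1, m2⟩ := main_on_X Q hQ0 hM hsym hθ'
  have hsum : (∑' k : ℕ, (k:ℝ≥0∞) *
        (P ({ω | SiFn I ω = ((k:ℕ):ℕ∞)} ∩ {ω | SminusFn I ω = 0})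
          / P {ω | SminusFn I ω = 0}))
      = ∑' k : ℕ, (k:ℝ≥0∞) *
        (Q ({f : X | cnt univ f = (k:ℕ∞)} ∩ {f : X | cnt (Iio 0) f = (0:ℕ∞)})
          / Q {f : X | cnt (Iio 0) f = (0:ℕ∞)}) :=
    tsum_congr fun k => by rw [hC k, hB]
  constructor
  · rw [← hA, ← hD, hsum]
    exact m1
  · rw [← hA, ← hD, hsum]
    exact m2
end
end

section
/- Under Assumption 1, if θ := P(S₊ⁱ = 0) > 0 and P(S₊ⁱ < ∞) = 1, then θ⁻¹ = E(Sᵗ) ≤ E(Sⁱ) = 1 + 2·E(S₊ⁱ), where E(Sᵗ) := Σ_{k=1}^∞ k·π_k, and E(Sⁱ) and E(S₊ⁱ) (which may be infinite) are the expectations of Sⁱ and S₊ⁱ. -/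
open MeasureTheory Filter Set ENNReal

noncomputable section
set_option linter.unusedSectionVars false


namespace ThmAux


/-! ### Boolean helpers -/

lemma bool_eq_decide {b : Bool} {p : Prop} [Decidable p] (h : b = true ↔ p) : b = decide p := by
  cases b <;> simp_all

lemma bool_eq_decide_iff {b : Bool} {p : Prop} [Decidable p] : (b = decide p) ↔ (b = true ↔ p) := by
  cases b <;> simp_all

/-! ### Finset helpers -/

lemma image_sub_sub_cancel (X : Finset ℤ) (s : ℤ) :
    (X.image (· - s)).image (· - (-s)) = X := by
  rw [Finset.image_image]
  have : ((· - (-s)) ∘ (· - s)) = id := by funext u; simp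
  rw [this, Finset.image_id]

lemma sub_inj (a : ℤ) : Function.Injective (fun x : ℤ => x - a) := by
  intro u v h; dsimp at h; omega

lemma mem_image_sub {X : Finset ℤ} {s t : ℤ} : t ∈ X.image (· - s) ↔ t + s ∈ X := by
  simp only [Finset.mem_image]
  constructor
  · rintro ⟨u, hu, rfl⟩; simpa using hu
  · intro h; exact ⟨t + s, h, by ring⟩

/-- number of elements of `S` below the `i`-th element is `i`. -/
lemma card_filter_lt_orderEmbOfFin (S : Finset ℤ) {k : ℕ} (h : S.card = k) (i : Fin k) :
    (S.filter (· < S.orderEmbOfFin h i)).card = i := by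
  set e := S.orderEmbOfFin h with he
  have himg : S.filter (· < e i) = (Finset.Iio i).image (fun m => e m) := by
    ext x
    simp only [Finset.mem_filter, Finset.mem_image, Finset.mem_Iio]
    constructor
    · rintro ⟨hxS, hxlt⟩
      have : x ∈ Set.range e := by rw [Finset.range_orderEmbOfFin]; exact hxS
      rcases this with ⟨m, rfl⟩
      exact ⟨m, e.strictMono.lt_iff_lt.mp hxlt, rfl⟩
    · rintro ⟨m, hm, rfl⟩
      exact ⟨Finset.orderEmbOfFin_mem _ _ _, e.strictMono hm⟩
  rw [himg, Finset.card_image_of_injective _ e.injective, Fin.card_Iio]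

lemma orderEmbOfFin_eq_of_card_filter {S : Finset ℤ} {k j : ℕ} (h : S.card = k)
    (hj : j < k) {x : ℤ} (hx : x ∈ S) (hcard : (S.filter (· < x)).card = j) :
    S.orderEmbOfFin h ⟨j, hj⟩ = x := by
  have : x ∈ Set.range (S.orderEmbOfFin h) := by rw [Finset.range_orderEmbOfFin]; exact hx
  rcases this with ⟨m, rfl⟩
  have := card_filter_lt_orderEmbOfFin S h m
  have hmj : (m : ℕ) = j := by rw [hcard] at this; omega
  congr 1
  exact Fin.ext hmj.symm

/-! ### Configuration types and equivalences -/

/-- Finsets containing `0`, of card `k`, with `j` negative elements. -/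
def Tkj (k j : ℕ) : Type := {T : Finset ℤ // 0 ∈ T ∧ T.card = k ∧ (T.filter (· < 0)).card = j}

instance (k j : ℕ) : Countable (Tkj k j) := by unfold Tkj; infer_instance

lemma Tk0_nonneg {k : ℕ} (T : Tkj k 0) : ∀ t ∈ T.1, 0 ≤ t := by
  intro t ht
  by_contra hlt
  have : t ∈ T.1.filter (· < 0) := Finset.mem_filter.mpr ⟨ht, by omega⟩
  have := Finset.card_eq_zero.mp T.2.2.2
  simp [this] at *

/-- shift a `Tkj k 0` configuration so that `j` points become negative. -/
def toJ {k j : ℕ} (hj : j < k) (T : Tkj k 0) : Tkj k j := by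
  refine ⟨T.1.image (· - T.1.orderEmbOfFin T.2.2.1 ⟨j, hj⟩), ?_, ?_, ?_⟩
  · exact Finset.mem_image.mpr ⟨_, Finset.orderEmbOfFin_mem _ _ _, sub_self _⟩
  · rw [Finset.card_image_of_injective _ (sub_inj _)]; exact T.2.2.1
  · set a := T.1.orderEmbOfFin T.2.2.1 ⟨j, hj⟩ with ha
    have : (T.1.image (· - a)).filter (· < 0) = (T.1.filter (· < a)).image (· - a) := by
      ext y
      simp only [Finset.mem_filter, Finset.mem_image]
      constructor
      · rintro ⟨⟨u, hu, rfl⟩, hy⟩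
        exact ⟨u, ⟨hu, by omega⟩, rfl⟩
      · rintro ⟨u, ⟨hu, hu'⟩, rfl⟩
        exact ⟨⟨u, hu, rfl⟩, by omega⟩
    rw [this, Finset.card_image_of_injective _ (sub_inj _)]
    exact card_filter_lt_orderEmbOfFin T.1 T.2.2.1 ⟨j, hj⟩

/-- shift a `Tkj k j` configuration to anchor at its minimum. -/
def toZero {k j : ℕ} (T : Tkj k j) : Tkj k 0 := by
  refine ⟨T.1.image (· - T.1.min' ⟨0, T.2.1⟩), ?_, ?_, ?_⟩
  · exact Finset.mem_image.mpr ⟨_, T.1.min'_mem _, sub_self _⟩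
  · rw [Finset.card_image_of_injective _ (sub_inj _)]; exact T.2.2.1
  · rw [Finset.card_eq_zero, Finset.filter_eq_empty_iff]
    rintro y hy
    rcases Finset.mem_image.mp hy with ⟨u, hu, rfl⟩
    have := Finset.min'_le T.1 u hu
    omega

lemma toZero_toJ {k j : ℕ} (hj : j < k) (T : Tkj k 0) : toZero (toJ hj T) = T := by
  set a := T.1.orderEmbOfFin T.2.2.1 ⟨j, hj⟩ with ha
  apply Subtype.ext
  show ((toJ hj T).1).image (· - (toJ hj T).1.min' _) = T.1
  have h1 : (toJ hj T).1 = T.1.image (· - a) := rfl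
  have hmin : (toJ hj T).1.min' ⟨0, (toJ hj T).2.1⟩ = -a := by
    apply le_antisymm
    · refine Finset.min'_le _ _ ?_
      rw [h1]
      exact Finset.mem_image.mpr ⟨0, T.2.1, by ring⟩
    · apply Finset.le_min'
      intro y hy
      rw [h1] at hy
      rcases Finset.mem_image.mp hy with ⟨u, hu, rfl⟩
      have := Tk0_nonneg T u hu
      omega
  rw [hmin, h1]
  exact image_sub_sub_cancel T.1 a

lemma toJ_toZero {k j : ℕ} (hj : j < k) (T : Tkj k j) : toJ hj (toZero T) = T := by
  apply Subtype.ext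
  set m := T.1.min' ⟨0, T.2.1⟩ with hm
  have h1 : (toZero T).1 = T.1.image (· - m) := rfl
  have ha : (toZero T).1.orderEmbOfFin (toZero T).2.2.1 ⟨j, hj⟩ = -m := by
    apply orderEmbOfFin_eq_of_card_filter
    · rw [h1]; exact Finset.mem_image.mpr ⟨0, T.2.1, by ring⟩
    · have : (toZero T).1.filter (· < -m) = (T.1.filter (· < 0)).image (· - m) := by
        rw [h1]; ext y
        simp only [Finset.mem_filter, Finset.mem_image]
        constructor
        · rintro ⟨⟨u, hu, rfl⟩, hy⟩
          exact ⟨u, ⟨hu, by omega⟩, rfl⟩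
        · rintro ⟨u, ⟨hu, hu'⟩, rfl⟩
          exact ⟨⟨u, hu, rfl⟩, by omega⟩
      rw [this, Finset.card_image_of_injective _ (sub_inj _)]
      exact T.2.2.2
  show ((toZero T).1).image (· - (toZero T).1.orderEmbOfFin (toZero T).2.2.1 ⟨j, hj⟩) = T.1
  rw [ha, h1]
  exact image_sub_sub_cancel T.1 m

/-- The equivalence between anchored configurations and those with `j` negatives. -/
def equivTkj {k j : ℕ} (hj : j < k) : Tkj k 0 ≃ Tkj k j where
  toFun := toJ hj
  invFun := toZero
  left_inv := toZero_toJ hj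
  right_inv := toJ_toZero hj

lemma equivTkj_spec {k j : ℕ} (hj : j < k) (T : Tkj k 0) :
    ∃ s ∈ T.1, (equivTkj hj T).1 = T.1.image (· - s) :=
  ⟨_, Finset.orderEmbOfFin_mem _ _ _, rfl⟩

/-- positive configurations of `j` points -/
def Aj (j : ℕ) : Type := {A : Finset ℤ // A.card = j ∧ ∀ a ∈ A, 0 < a}
/-- negative configurations of `j` points -/
def Bj (j : ℕ) : Type := {B : Finset ℤ // B.card = j ∧ ∀ b ∈ B, b < 0}

instance (j : ℕ) : Countable (Aj j) := by unfold Aj; infer_instance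
instance (j : ℕ) : Countable (Bj j) := by unfold Bj; infer_instance

lemma Aj_nonempty {j : ℕ} (hj : 1 ≤ j) (A : Aj j) : A.1.Nonempty :=
  Finset.card_pos.mp (by rw [A.2.1]; omega)

lemma Bj_nonempty {j : ℕ} (hj : 1 ≤ j) (B : Bj j) : B.1.Nonempty :=
  Finset.card_pos.mp (by rw [B.2.1]; omega)

lemma zero_not_mem_Aj {j : ℕ} (A : Aj j) : 0 ∉ A.1 := fun h => absurd (A.2.2 0 h) (by omega)
lemma zero_not_mem_Bj {j : ℕ} (B : Bj j) : 0 ∉ B.1 := fun h => absurd (B.2.2 0 h) (by omega)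

/-- Map a positive configuration to a negative one, reflecting at the top point. -/
def toB {j : ℕ} (hj : 1 ≤ j) (A : Aj j) : Bj j := by
  refine ⟨((insert 0 A.1).image (· - A.1.max' (Aj_nonempty hj A))).erase 0, ?_, ?_⟩
  · have hmem : (0:ℤ) ∈ (insert 0 A.1).image (· - A.1.max' (Aj_nonempty hj A)) :=
      Finset.mem_image.mpr ⟨_, Finset.mem_insert.mpr (Or.inr (A.1.max'_mem _)), sub_self _⟩
    rw [Finset.card_erase_of_mem hmem, Finset.card_image_of_injective _ (sub_inj _),
      Finset.card_insert_of_notMem (zero_not_mem_Aj A), A.2.1]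
    omega
  · intro b hb
    rcases Finset.mem_erase.mp hb with ⟨hb0, hbim⟩
    rcases Finset.mem_image.mp hbim with ⟨u, hu, rfl⟩
    have hM := A.1.max'_mem (Aj_nonempty hj A)
    have hMpos : 0 < A.1.max' (Aj_nonempty hj A) := A.2.2 _ hM
    rcases Finset.mem_insert.mp hu with rfl | hu'
    · omega
    · have := Finset.le_max' A.1 u hu'
      omega

/-- Map a negative configuration to a positive one, reflecting at the bottom point. -/
def toA {j : ℕ} (hj : 1 ≤ j) (B : Bj j) : Aj j := by
  refine ⟨((insert 0 B.1).image (· - B.1.min' (Bj_nonempty hj B))).erase 0, ?_, ?_⟩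
  · have hmem : (0:ℤ) ∈ (insert 0 B.1).image (· - B.1.min' (Bj_nonempty hj B)) :=
      Finset.mem_image.mpr ⟨_, Finset.mem_insert.mpr (Or.inr (B.1.min'_mem _)), sub_self _⟩
    rw [Finset.card_erase_of_mem hmem, Finset.card_image_of_injective _ (sub_inj _),
      Finset.card_insert_of_notMem (zero_not_mem_Bj B), B.2.1]
    omega
  · intro b hb
    rcases Finset.mem_erase.mp hb with ⟨hb0, hbim⟩
    rcases Finset.mem_image.mp hbim with ⟨u, hu, rfl⟩
    have hm := B.1.min'_mem (Bj_nonempty hj B)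
    have hmneg : B.1.min' (Bj_nonempty hj B) < 0 := B.2.2 _ hm
    rcases Finset.mem_insert.mp hu with rfl | hu'
    · omega
    · have := Finset.min'_le B.1 u hu'
      omega

lemma insert_toB {j : ℕ} (hj : 1 ≤ j) (A : Aj j) :
    insert 0 (toB hj A).1 = (insert 0 A.1).image (· - A.1.max' (Aj_nonempty hj A)) := by
  apply Finset.insert_erase
  exact Finset.mem_image.mpr ⟨_, Finset.mem_insert.mpr (Or.inr (A.1.max'_mem _)), sub_self _⟩

lemma insert_toA {j : ℕ} (hj : 1 ≤ j) (B : Bj j) :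
    insert 0 (toA hj B).1 = (insert 0 B.1).image (· - B.1.min' (Bj_nonempty hj B)) := by
  apply Finset.insert_erase
  exact Finset.mem_image.mpr ⟨_, Finset.mem_insert.mpr (Or.inr (B.1.min'_mem _)), sub_self _⟩

lemma min'_toB {j : ℕ} (hj : 1 ≤ j) (A : Aj j) :
    (toB hj A).1.min' (Bj_nonempty hj (toB hj A)) = -(A.1.max' (Aj_nonempty hj A)) := by
  set M := A.1.max' (Aj_nonempty hj A) with hM
  have hMpos : 0 < M := A.2.2 _ (A.1.max'_mem _)
  apply le_antisymm
  · apply Finset.min'_le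
    refine Finset.mem_erase.mpr ⟨by omega, ?_⟩
    exact Finset.mem_image.mpr ⟨0, Finset.mem_insert_self _ _, by ring⟩
  · apply Finset.le_min'
    intro y hy
    rcases Finset.mem_erase.mp hy with ⟨hy0, hyim⟩
    rcases Finset.mem_image.mp hyim with ⟨u, hu, rfl⟩
    rcases Finset.mem_insert.mp hu with rfl | hu'
    · omega
    · have := A.2.2 u hu'
      omega

lemma max'_toA {j : ℕ} (hj : 1 ≤ j) (B : Bj j) :
    (toA hj B).1.max' (Aj_nonempty hj (toA hj B)) = -(B.1.min' (Bj_nonempty hj B)) := by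
  set m := B.1.min' (Bj_nonempty hj B) with hm
  have hmneg : m < 0 := B.2.2 _ (B.1.min'_mem _)
  apply le_antisymm
  · apply Finset.max'_le
    intro y hy
    rcases Finset.mem_erase.mp hy with ⟨hy0, hyim⟩
    rcases Finset.mem_image.mp hyim with ⟨u, hu, rfl⟩
    rcases Finset.mem_insert.mp hu with rfl | hu'
    · omega
    · have := B.2.2 u hu'
      omega
  · apply Finset.le_max'
    refine Finset.mem_erase.mpr ⟨by omega, ?_⟩
    exact Finset.mem_image.mpr ⟨0, Finset.mem_insert_self _ _, by ring⟩

lemma toA_toB {j : ℕ} (hj : 1 ≤ j) (A : Aj j) : toA hj (toB hj A) = A := by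
  apply Subtype.ext
  show ((insert 0 (toB hj A).1).image (· - (toB hj A).1.min' _)).erase 0 = A.1
  have h1 : (toB hj A).1.min' (Bj_nonempty hj (toB hj A))
      = -(A.1.max' (Aj_nonempty hj A)) := min'_toB hj A
  rw [h1, insert_toB hj A, image_sub_sub_cancel]
  exact Finset.erase_insert (zero_not_mem_Aj A)

lemma toB_toA {j : ℕ} (hj : 1 ≤ j) (B : Bj j) : toB hj (toA hj B) = B := by
  apply Subtype.ext
  show ((insert 0 (toA hj B).1).image (· - (toA hj B).1.max' _)).erase 0 = B.1
  have h1 : (toA hj B).1.max' (Aj_nonempty hj (toA hj B))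
      = -(B.1.min' (Bj_nonempty hj B)) := max'_toA hj B
  rw [h1, insert_toA hj B, image_sub_sub_cancel]
  exact Finset.erase_insert (zero_not_mem_Bj B)

/-- The reflection equivalence between positive and negative configurations. -/
def equivAB {j : ℕ} (hj : 1 ≤ j) : Aj j ≃ Bj j where
  toFun := toB hj
  invFun := toA hj
  left_inv := toA_toB hj
  right_inv := toB_toA hj


/-! ### Events -/

section Events

variable {Ω : Type*} [MeasurableSpace Ω]

/-- Cylinder event. -/
def cyl (I : ℤ → Ω → Bool) (F : Finset ℤ) (ε : ℤ → Bool) : Set Ω :=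
  {ω | ∀ t ∈ F, I t ω = ε t}

/-- Full-pattern event. -/
def cEq (I : ℤ → Ω → Bool) (T : Finset ℤ) : Set Ω :=
  {ω | ∀ t : ℤ, I t ω = decide (t ∈ T)}

/-- Positive-half pattern event. -/
def posEq (I : ℤ → Ω → Bool) (A : Finset ℤ) : Set Ω :=
  {ω | ∀ t : ℤ, 0 < t → I t ω = decide (t ∈ A)}

/-- Negative-half pattern event. -/
def negEq (I : ℤ → Ω → Bool) (B : Finset ℤ) : Set Ω :=
  {ω | ∀ t : ℤ, t < 0 → I t ω = decide (t ∈ B)}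

/-- "The first points on the right are exactly `A`" event. -/
def fwd (I : ℤ → Ω → Bool) (A : Finset ℤ) : Set Ω :=
  {ω | I 0 ω = true ∧ ∀ t : ℤ, 1 ≤ t → (∃ a ∈ A, t ≤ a) → I t ω = decide (t ∈ A)}

/-- "The first points on the left are exactly `B`" event. -/
def bwd (I : ℤ → Ω → Bool) (B : Finset ℤ) : Set Ω :=
  {ω | I 0 ω = true ∧ ∀ t : ℤ, t ≤ -1 → (∃ b ∈ B, b ≤ t) → I t ω = decide (t ∈ B)}

variable {I : ℤ → Ω → Bool}

lemma measurableSet_cyl (hI : ∀ t, Measurable (I t))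
    (F : Finset ℤ) (ε : ℤ → Bool) : MeasurableSet (cyl I F ε) := by
  have : cyl I F ε = ⋂ t ∈ F, {ω | I t ω = ε t} := by
    ext ω; simp [cyl]
  rw [this]
  exact MeasurableSet.biInter F.countable_toSet
    (fun t _ => (hI t) (measurableSet_singleton _))

lemma measurableSet_cEq (hI : ∀ t, Measurable (I t))
    (T : Finset ℤ) : MeasurableSet (cEq I T) := by
  have : cEq I T = ⋂ t : ℤ, {ω | I t ω = decide (t ∈ T)} := by ext ω; simp [cEq]
  rw [this]
  exact MeasurableSet.iInter fun t => (hI t) (measurableSet_singleton _)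

private lemma measurableSet_guarded (hI : ∀ t, Measurable (I t)) (p q : ℤ → Prop)
    (b : ℤ → Bool) (t : ℤ) : MeasurableSet {ω | p t → q t → I t ω = b t} := by
  rcases em (p t) with h1 | h1
  · rcases em (q t) with h2 | h2
    · have : {ω | p t → q t → I t ω = b t} = {ω | I t ω = b t} := by ext ω; simp [h1, h2]
      rw [this]; exact (hI t) (measurableSet_singleton _)
    · have : {ω | p t → q t → I t ω = b t} = Set.univ := by ext ω; simp [h2]
      rw [this]; exact MeasurableSet.univ
  · have : {ω | p t → q t → I t ω = b t} = Set.univ := by ext ω; simp [h1]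
    rw [this]; exact MeasurableSet.univ

lemma measurableSet_posEq (hI : ∀ t, Measurable (I t)) (A : Finset ℤ) :
    MeasurableSet (posEq I A) := by
  have : posEq I A = ⋂ t : ℤ, {ω | 0 < t → True → I t ω = decide (t ∈ A)} := by
    ext ω; simp [posEq]
  rw [this]
  exact MeasurableSet.iInter fun t => measurableSet_guarded hI (fun t => 0 < t) (fun _ => True) (fun t => decide (t ∈ A)) t

lemma measurableSet_negEq (hI : ∀ t, Measurable (I t)) (B : Finset ℤ) :
    MeasurableSet (negEq I B) := by
  have : negEq I B = ⋂ t : ℤ, {ω | t < 0 → True → I t ω = decide (t ∈ B)} := by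
    ext ω; simp [negEq]
  rw [this]
  exact MeasurableSet.iInter fun t => measurableSet_guarded hI (fun t => t < 0) (fun _ => True) (fun t => decide (t ∈ B)) t

lemma measurableSet_fwd (hI : ∀ t, Measurable (I t)) (A : Finset ℤ) :
    MeasurableSet (fwd I A) := by
  have : fwd I A = {ω | I 0 ω = true} ∩
      ⋂ t : ℤ, {ω | 1 ≤ t → (∃ a ∈ A, t ≤ a) → I t ω = decide (t ∈ A)} := by
    ext ω; simp only [fwd, Set.mem_setOf_eq, Set.mem_inter_iff, Set.mem_iInter]
  rw [this]
  exact ((hI 0) (measurableSet_singleton _)).inter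
    (MeasurableSet.iInter fun t => measurableSet_guarded hI (fun t => 1 ≤ t)
      (fun t => ∃ a ∈ A, t ≤ a) (fun t => decide (t ∈ A)) t)

lemma measurableSet_bwd (hI : ∀ t, Measurable (I t)) (B : Finset ℤ) :
    MeasurableSet (bwd I B) := by
  have : bwd I B = {ω | I 0 ω = true} ∩
      ⋂ t : ℤ, {ω | t ≤ -1 → (∃ b ∈ B, b ≤ t) → I t ω = decide (t ∈ B)} := by
    ext ω; simp only [bwd, Set.mem_setOf_eq, Set.mem_inter_iff, Set.mem_iInter]
  rw [this]
  exact ((hI 0) (measurableSet_singleton _)).inter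
    (MeasurableSet.iInter fun t => measurableSet_guarded hI (fun t => t ≤ -1)
      (fun t => ∃ b ∈ B, b ≤ t) (fun t => decide (t ∈ B)) t)

/-! ### Membership characterisations -/

lemma mem_cEq {T : Finset ℤ} {ω : Ω} : ω ∈ cEq I T ↔ {t : ℤ | I t ω = true} = ↑T := by
  simp only [cEq, Set.mem_setOf_eq]
  constructor
  · intro h
    ext t
    simp only [Set.mem_setOf_eq, Finset.mem_coe]
    rw [h t]
    simp
  · intro h t
    apply bool_eq_decide
    rw [← Finset.mem_coe, ← h]
    exact Iff.rfl

lemma mem_posEq {A : Finset ℤ} (hA : ∀ a ∈ A, 0 < a) {ω : Ω} :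
    ω ∈ posEq I A ↔ {t : ℤ | 0 < t ∧ I t ω = true} = ↑A := by
  simp only [posEq, Set.mem_setOf_eq]
  constructor
  · intro h
    ext t
    simp only [Set.mem_setOf_eq, Finset.mem_coe]
    constructor
    · rintro ⟨ht, hIt⟩
      rw [h t ht] at hIt
      simpa using hIt
    · intro ht
      refine ⟨hA t ht, ?_⟩
      rw [h t (hA t ht)]
      simpa using ht
  · intro h t ht
    apply bool_eq_decide
    constructor
    · intro hIt
      rw [← Finset.mem_coe, ← h]
      exact ⟨ht, hIt⟩
    · intro htA
      have : t ∈ ({t : ℤ | 0 < t ∧ I t ω = true}) := by rw [h]; exact htA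
      exact this.2

lemma mem_negEq {B : Finset ℤ} (hB : ∀ b ∈ B, b < 0) {ω : Ω} :
    ω ∈ negEq I B ↔ {t : ℤ | t < 0 ∧ I t ω = true} = ↑B := by
  simp only [negEq, Set.mem_setOf_eq]
  constructor
  · intro h
    ext t
    simp only [Set.mem_setOf_eq, Finset.mem_coe]
    constructor
    · rintro ⟨ht, hIt⟩
      rw [h t ht] at hIt
      simpa using hIt
    · intro ht
      refine ⟨hB t ht, ?_⟩
      rw [h t (hB t ht)]
      simpa using ht
  · intro h t ht
    apply bool_eq_decide
    constructor
    · intro hIt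
      rw [← Finset.mem_coe, ← h]
      exact ⟨ht, hIt⟩
    · intro htB
      have : t ∈ ({t : ℤ | t < 0 ∧ I t ω = true}) := by rw [h]; exact htB
      exact this.2

lemma encard_eq_iff_exists_finset {S : Set ℤ} {k : ℕ} :
    S.encard = (k : ℕ∞) ↔ ∃ T : Finset ℤ, (↑T : Set ℤ) = S ∧ T.card = k := by
  constructor
  · intro h
    have hfin : S.Finite := Set.finite_of_encard_eq_coe h
    refine ⟨hfin.toFinset, hfin.coe_toFinset, ?_⟩
    have := hfin.encard_eq_coe_toFinset_card
    rw [h] at this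
    exact_mod_cast this.symm
  · rintro ⟨T, rfl, rfl⟩
    exact Set.encard_coe_eq_coe_finsetCard T

/-! ### Disjointness -/

lemma cEq_disjoint {T T' : Finset ℤ} (h : T ≠ T') : Disjoint (cEq I T) (cEq I T') := by
  rw [Set.disjoint_left]
  intro ω hω hω'
  exact h (Finset.coe_injective ((mem_cEq.mp hω).symm.trans (mem_cEq.mp hω')))

lemma posEq_disjoint {j : ℕ} : Pairwise (Function.onFun Disjoint
    (fun A : Aj j => posEq I A.1)) := by
  intro A A' hne
  rw [Function.onFun, Set.disjoint_left]
  intro ω hω hω'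
  exact hne (Subtype.ext (Finset.coe_injective
    (((mem_posEq A.2.2).mp hω).symm.trans ((mem_posEq A'.2.2).mp hω'))))

lemma negEq_disjoint {j : ℕ} : Pairwise (Function.onFun Disjoint
    (fun B : Bj j => negEq I B.1)) := by
  intro B B' hne
  rw [Function.onFun, Set.disjoint_left]
  intro ω hω hω'
  exact hne (Subtype.ext (Finset.coe_injective
    (((mem_negEq B.2.2).mp hω).symm.trans ((mem_negEq B'.2.2).mp hω'))))

lemma fwd_subset_of_max_le {j : ℕ} (hj : 1 ≤ j) (A A' : Aj j) {ω : Ω}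
    (hω : ω ∈ fwd I A.1) (hω' : ω ∈ fwd I A'.1)
    (hmax : A.1.max' (Aj_nonempty hj A) ≤ A'.1.max' (Aj_nonempty hj A')) : A.1 ⊆ A'.1 := by
  intro t htA
  have h1 : (1 : ℤ) ≤ t := by have := A.2.2 t htA; omega
  have h2 : t ≤ A.1.max' (Aj_nonempty hj A) := Finset.le_max' _ _ htA
  have hIt : I t ω = true := by
    rw [hω.2 t h1 ⟨_, A.1.max'_mem _, h2⟩]
    simp [htA]
  have h3 := hω'.2 t h1 ⟨_, A'.1.max'_mem _, le_trans h2 hmax⟩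
  rw [hIt] at h3
  simpa using h3.symm

lemma fwd_disjoint {j : ℕ} (hj : 1 ≤ j) : Pairwise (Function.onFun Disjoint
    (fun A : Aj j => fwd I A.1)) := by
  intro A A' hne
  rw [Function.onFun, Set.disjoint_left]
  intro ω hω hω'
  apply hne
  apply Subtype.ext
  rcases le_total (A.1.max' (Aj_nonempty hj A)) (A'.1.max' (Aj_nonempty hj A')) with h | h
  · exact Finset.eq_of_subset_of_card_le (fwd_subset_of_max_le hj A A' hω hω' h)
      (by rw [A.2.1, A'.2.1])
  · exact (Finset.eq_of_subset_of_card_le (fwd_subset_of_max_le hj A' A hω' hω h)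
      (by rw [A.2.1, A'.2.1])).symm

/-! ### Set decompositions -/

lemma setSi (I : ℤ → Ω → Bool) (k : ℕ) :
    {ω | SiFn I ω = (k : ℕ∞)} = ⋃ (T : {T : Finset ℤ // T.card = k}), cEq I T.1 := by
  ext ω
  simp only [Set.mem_setOf_eq, Set.mem_iUnion]
  constructor
  · intro hk
    obtain ⟨T, hTeq, hTcard⟩ := encard_eq_iff_exists_finset.mp hk
    exact ⟨⟨T, hTcard⟩, mem_cEq.mpr hTeq.symm⟩
  · rintro ⟨T, hω⟩
    show Set.encard _ = _
    rw [mem_cEq.mp hω, Set.encard_coe_eq_coe_finsetCard, T.2]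

lemma setSplus (I : ℤ → Ω → Bool) (j : ℕ) :
    {ω | SplusFn I ω = (j : ℕ∞)} = ⋃ (A : Aj j), posEq I A.1 := by
  ext ω
  simp only [Set.mem_setOf_eq, Set.mem_iUnion]
  constructor
  · intro hk
    obtain ⟨A, hAeq, hAcard⟩ := encard_eq_iff_exists_finset.mp hk
    have hApos : ∀ a ∈ A, 0 < a := by
      intro a ha
      have : a ∈ ({t : ℤ | 0 < t ∧ I t ω = true}) := by rw [← hAeq]; exact ha
      exact this.1
    exact ⟨⟨A, hAcard, hApos⟩, (mem_posEq hApos).mpr hAeq.symm⟩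
  · rintro ⟨A, hω⟩
    show Set.encard _ = _
    rw [(mem_posEq A.2.2).mp hω, Set.encard_coe_eq_coe_finsetCard, A.2.1]

lemma setSminus (I : ℤ → Ω → Bool) (j : ℕ) :
    {ω | SminusFn I ω = (j : ℕ∞)} = ⋃ (B : Bj j), negEq I B.1 := by
  ext ω
  simp only [Set.mem_setOf_eq, Set.mem_iUnion]
  constructor
  · intro hk
    obtain ⟨B, hBeq, hBcard⟩ := encard_eq_iff_exists_finset.mp hk
    have hBneg : ∀ b ∈ B, b < 0 := by
      intro b hb
      have : b ∈ ({t : ℤ | t < 0 ∧ I t ω = true}) := by rw [← hBeq]; exact hb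
      exact this.1
    exact ⟨⟨B, hBcard, hBneg⟩, (mem_negEq hBneg).mpr hBeq.symm⟩
  · rintro ⟨B, hω⟩
    show Set.encard _ = _
    rw [(mem_negEq B.2.2).mp hω, Set.encard_coe_eq_coe_finsetCard, B.2.1]

lemma nat_ivt {g : ℕ → ℕ} (h0 : g 0 = 0) (hstep : ∀ n, g (n + 1) ≤ g n + 1)
    {j N : ℕ} (hj : j ≤ g N) : ∃ n, g n = j := by
  induction N with
  | zero => exact ⟨0, by omega⟩
  | succ N ih =>
    rcases le_or_gt j (g N) with h | h
    · exact ih h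
    · exact ⟨N + 1, by have := hstep N; omega⟩

lemma setTailPlus (I : ℤ → Ω → Bool) {j : ℕ} (hj : 1 ≤ j) :
    {ω | (j : ℕ∞) ≤ SplusFn I ω} ∩ {ω | I 0 ω = true} = ⋃ (A : Aj j), fwd I A.1 := by
  ext ω
  simp only [Set.mem_inter_iff, Set.mem_setOf_eq, Set.mem_iUnion]
  constructor
  · rintro ⟨hSj, hI0⟩
    obtain ⟨S, hSsub, hScard⟩ := Set.exists_subset_encard_eq hSj
    have hSfin : S.Finite := Set.finite_of_encard_eq_coe hScard
    have hS'card : hSfin.toFinset.card = j := by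
      have := hSfin.encard_eq_coe_toFinset_card
      rw [hScard] at this
      exact_mod_cast this.symm
    set N : ℕ := hSfin.toFinset.sup Int.toNat with hN
    have hS'le : ∀ s ∈ hSfin.toFinset, s ≤ (N : ℤ) := by
      intro s hs
      have h1 : s.toNat ≤ N := Finset.le_sup (f := Int.toNat) hs
      have h2 : 0 < s := (hSsub (hSfin.mem_toFinset.mp hs)).1
      omega
    set g : ℕ → ℕ := fun n => ((Finset.Icc (1 : ℤ) (n : ℤ)).filter (fun t => I t ω = true)).card
      with hg
    have hg0 : g 0 = 0 := by simp [hg]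
    have hgstep : ∀ n, g (n + 1) ≤ g n + 1 := by
      intro n
      have hicc : Finset.Icc (1 : ℤ) (((n : ℕ) + 1 : ℕ) : ℤ)
          = insert ((n : ℤ) + 1) (Finset.Icc (1 : ℤ) (n : ℤ)) := by
        ext x
        simp only [Finset.mem_Icc, Finset.mem_insert]
        push_cast
        omega
      simp only [hg, hicc, Finset.filter_insert]
      split
      · exact le_trans (Finset.card_insert_le _ _) (by omega)
      · omega
    have hgN : j ≤ g N := by
      have hsub : hSfin.toFinset ⊆ (Finset.Icc (1 : ℤ) (N : ℤ)).filter
          (fun t => I t ω = true) := by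
        intro s hs
        have hmem := hSsub (hSfin.mem_toFinset.mp hs)
        exact Finset.mem_filter.mpr ⟨Finset.mem_Icc.mpr ⟨hmem.1, hS'le s hs⟩, hmem.2⟩
      calc j = hSfin.toFinset.card := hS'card.symm
      _ ≤ g N := Finset.card_le_card hsub
    obtain ⟨n, hn⟩ := nat_ivt hg0 hgstep hgN
    set A : Finset ℤ := (Finset.Icc (1 : ℤ) (n : ℤ)).filter (fun t => I t ω = true) with hA
    have hApos : ∀ a ∈ A, 0 < a := by
      intro a ha
      have := Finset.mem_Icc.mp (Finset.mem_filter.mp ha).1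
      omega
    refine ⟨⟨A, hn, hApos⟩, hI0, ?_⟩
    intro t ht1 hex
    obtain ⟨a, haA, hta⟩ := hex
    have haN : a ≤ (n : ℤ) := (Finset.mem_Icc.mp (Finset.mem_filter.mp haA).1).2
    have htIcc : t ∈ Finset.Icc (1 : ℤ) (n : ℤ) := Finset.mem_Icc.mpr ⟨ht1, le_trans hta haN⟩
    apply bool_eq_decide
    constructor
    · intro h
      exact Finset.mem_filter.mpr ⟨htIcc, h⟩
    · intro h
      exact (Finset.mem_filter.mp h).2
  · rintro ⟨A, hI0, hpat⟩
    refine ⟨?_, hI0⟩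
    have hsub : (↑A.1 : Set ℤ) ⊆ {t : ℤ | 0 < t ∧ I t ω = true} := by
      intro a ha
      have haA : a ∈ A.1 := ha
      have h1 : (0 : ℤ) < a := A.2.2 a haA
      have h2 := hpat a (by omega) ⟨a, haA, le_refl a⟩
      exact ⟨h1, by rw [h2]; simp [haA]⟩
    calc (j : ℕ∞) = (↑A.1 : Set ℤ).encard := by
          rw [Set.encard_coe_eq_coe_finsetCard, A.2.1]
    _ ≤ _ := Set.encard_le_encard hsub

lemma setSiSm (I : ℤ → Ω → Bool) (k j : ℕ) :
    ({ω | SiFn I ω = (k : ℕ∞)} ∩ {ω | SminusFn I ω = (j : ℕ∞)}) ∩ {ω | I 0 ω = true}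
      = ⋃ (T : Tkj k j), cEq I T.1 := by
  ext ω
  simp only [Set.mem_inter_iff, Set.mem_setOf_eq, Set.mem_iUnion]
  constructor
  · rintro ⟨⟨hk, hjm⟩, h0⟩
    obtain ⟨T, hTeq, hTcard⟩ := encard_eq_iff_exists_finset.mp hk
    have h0T : (0 : ℤ) ∈ T := by
      rw [← Finset.mem_coe, hTeq]
      exact h0
    have hfilter : (↑(T.filter (· < 0)) : Set ℤ) = {t : ℤ | t < 0 ∧ I t ω = true} := by
      ext t
      simp only [Finset.coe_filter, Set.mem_setOf_eq]
      constructor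
      · rintro ⟨htT, htneg⟩
        refine ⟨htneg, ?_⟩
        have : t ∈ ({t : ℤ | I t ω = true}) := by rw [← hTeq]; exact htT
        exact this
      · rintro ⟨htneg, htI⟩
        have : t ∈ (↑T : Set ℤ) := by rw [hTeq]; exact htI
        exact ⟨this, htneg⟩
    have hjcard : (T.filter (· < 0)).card = j := by
      have h1 : ({t : ℤ | t < 0 ∧ I t ω = true}).encard = (j : ℕ∞) := hjm
      rw [← hfilter, Set.encard_coe_eq_coe_finsetCard] at h1
      exact_mod_cast h1
    exact ⟨⟨T, h0T, hTcard, hjcard⟩, mem_cEq.mpr hTeq.symm⟩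
  · rintro ⟨T, hω⟩
    have hTeq := mem_cEq.mp hω
    have hI0 : I 0 ω = true := by
      have : (0 : ℤ) ∈ ({t : ℤ | I t ω = true}) := by
        rw [hTeq]; exact T.2.1
      exact this
    refine ⟨⟨?_, ?_⟩, hI0⟩
    · show Set.encard _ = _
      rw [hTeq, Set.encard_coe_eq_coe_finsetCard, T.2.2.1]
    · show Set.encard _ = _
      have : {t : ℤ | t < 0 ∧ I t ω = true} = ↑(T.1.filter (· < 0)) := by
        ext t
        simp only [Set.mem_setOf_eq, Finset.coe_filter]
        constructor
        · rintro ⟨htneg, htI⟩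
          have : t ∈ (↑T.1 : Set ℤ) := by rw [← hTeq]; exact htI
          exact ⟨this, htneg⟩
        · rintro ⟨htT, htneg⟩
          refine ⟨htneg, ?_⟩
          have : t ∈ ({t : ℤ | I t ω = true}) := by rw [hTeq]; exact htT
          exact this
      rw [this, Set.encard_coe_eq_coe_finsetCard, T.2.2.2]

lemma setSiI0 (I : ℤ → Ω → Bool) (k : ℕ) :
    {ω | SiFn I ω = (k : ℕ∞)} ∩ {ω | I 0 ω = true}
      = ⋃ (j : Fin k), (({ω | SiFn I ω = (k : ℕ∞)}
          ∩ {ω | SminusFn I ω = ((j : ℕ) : ℕ∞)}) ∩ {ω | I 0 ω = true}) := by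
  ext ω
  simp only [Set.mem_inter_iff, Set.mem_setOf_eq, Set.mem_iUnion]
  constructor
  · rintro ⟨hk, h0⟩
    have hfin : ({t : ℤ | I t ω = true}).Finite := Set.finite_of_encard_eq_coe hk
    have hsubfin : ({t : ℤ | t < 0 ∧ I t ω = true}).Finite :=
      hfin.subset (fun t ht => ht.2)
    obtain ⟨j, hj⟩ := hsubfin.exists_encard_eq_coe
    have hjk : j < k := by
      have hsub : insert (0 : ℤ) {t : ℤ | t < 0 ∧ I t ω = true} ⊆ {t : ℤ | I t ω = true} :=
        Set.insert_subset_iff.mpr ⟨h0, fun t ht => ht.2⟩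
      have hle := Set.encard_le_encard hsub
      have hk' : ({t : ℤ | I t ω = true}).encard = (k : ℕ∞) := hk
      rw [Set.encard_insert_of_notMem (by simp), hj, hk'] at hle
      have : (j : ℕ∞) + 1 = ((j + 1 : ℕ) : ℕ∞) := by push_cast; ring
      rw [this] at hle
      have : j + 1 ≤ k := by exact_mod_cast hle
      omega
    exact ⟨⟨j, hjk⟩, ⟨hk, hj⟩, h0⟩
  · rintro ⟨j, ⟨hk, _⟩, h0⟩
    exact ⟨hk, h0⟩

end Events


/-! ### Mirroring -/

section Mirror

variable {Ω : Type*} [MeasurableSpace Ω]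

/-- Time-reversed process. -/
def flip (I : ℤ → Ω → Bool) : ℤ → Ω → Bool := fun t => I (-t)

variable {I : ℤ → Ω → Bool}

lemma flip_zero : flip I 0 = I 0 := by
  funext ω; simp [flip]

lemma SplusFn_flip : SplusFn (flip I) = SminusFn I := by
  funext ω
  show Set.encard _ = Set.encard _
  have himg : {t : ℤ | 0 < t ∧ flip I t ω = true}
      = Neg.neg '' {t : ℤ | t < 0 ∧ I t ω = true} := by
    ext u
    simp only [Set.mem_image, Set.mem_setOf_eq, flip]
    constructor
    · rintro ⟨hu, hI⟩
      exact ⟨-u, ⟨by omega, hI⟩, by ring⟩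
    · rintro ⟨x, ⟨hx, hI⟩, rfl⟩
      exact ⟨by omega, by simpa using hI⟩
  rw [himg, Set.InjOn.encard_image (neg_injective.injOn)]

/-- The negation equivalence between positive and negative configurations. -/
def negAB (j : ℕ) : Aj j ≃ Bj j where
  toFun A := ⟨A.1.image (fun x => -x),
    by rw [Finset.card_image_of_injective _ neg_injective]; exact A.2.1,
    by
      intro b hb
      rcases Finset.mem_image.mp hb with ⟨a, ha, rfl⟩
      have := A.2.2 a ha
      omega⟩
  invFun B := ⟨B.1.image (fun x => -x),
    by rw [Finset.card_image_of_injective _ neg_injective]; exact B.2.1,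
    by
      intro a ha
      rcases Finset.mem_image.mp ha with ⟨b, hb, rfl⟩
      have := B.2.2 b hb
      omega⟩
  left_inv A := by
    apply Subtype.ext
    show (A.1.image (fun x => -x)).image (fun x => -x) = A.1
    rw [Finset.image_image]
    have : ((fun x : ℤ => -x) ∘ (fun x : ℤ => -x)) = id := by funext x; simp
    rw [this, Finset.image_id]
  right_inv B := by
    apply Subtype.ext
    show (B.1.image (fun x => -x)).image (fun x => -x) = B.1
    rw [Finset.image_image]
    have : ((fun x : ℤ => -x) ∘ (fun x : ℤ => -x)) = id := by funext x; simp
    rw [this, Finset.image_id]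

lemma mem_neg_image {A : Finset ℤ} {t : ℤ} : t ∈ A.image (fun x => -x) ↔ -t ∈ A := by
  simp only [Finset.mem_image]
  constructor
  · rintro ⟨a, ha, rfl⟩; simpa using ha
  · intro h; exact ⟨-t, h, by ring⟩

lemma fwd_flip (A : Finset ℤ) : fwd (flip I) A = bwd I (A.image (fun x => -x)) := by
  ext ω
  simp only [fwd, bwd, Set.mem_setOf_eq, flip, neg_zero]
  constructor
  · rintro ⟨h0, hpat⟩
    refine ⟨h0, ?_⟩
    intro t ht hex
    obtain ⟨b, hb, hbt⟩ := hex
    have hbA : -b ∈ A := by rwa [mem_neg_image] at hb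
    have h := hpat (-t) (by omega) ⟨-b, hbA, by omega⟩
    rw [neg_neg] at h
    rw [h]
    exact decide_eq_decide.mpr (by rw [mem_neg_image])
  · rintro ⟨h0, hpat⟩
    refine ⟨h0, ?_⟩
    intro t ht hex
    obtain ⟨a, ha, hat⟩ := hex
    have h := hpat (-t) (by omega) ⟨-a, mem_neg_image.mpr (by simpa using ha), by omega⟩
    rw [h]
    exact decide_eq_decide.mpr (by rw [mem_neg_image, neg_neg])

lemma posEq_flip (A : Finset ℤ) : posEq (flip I) A = negEq I (A.image (fun x => -x)) := by
  ext ω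
  simp only [posEq, negEq, Set.mem_setOf_eq, flip]
  constructor
  · intro h t ht
    have := h (-t) (by omega)
    rw [neg_neg] at this
    rw [this]
    exact decide_eq_decide.mpr (by rw [mem_neg_image])
  · intro h t ht
    have := h (-t) (by omega)
    rw [this]
    exact decide_eq_decide.mpr (by rw [mem_neg_image, neg_neg])

lemma setTailMinus (I : ℤ → Ω → Bool) {j : ℕ} (hj : 1 ≤ j) :
    {ω | (j : ℕ∞) ≤ SminusFn I ω} ∩ {ω | I 0 ω = true} = ⋃ (B : Bj j), bwd I B.1 := by
  have h := setTailPlus (flip I) hj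
  rw [SplusFn_flip, flip_zero] at h
  rw [h]
  ext ω
  simp only [Set.mem_iUnion]
  constructor
  · rintro ⟨A, hA⟩
    refine ⟨negAB j A, ?_⟩
    rw [fwd_flip] at hA
    exact hA
  · rintro ⟨B, hB⟩
    refine ⟨(negAB j).symm B, ?_⟩
    rw [fwd_flip]
    have : (((negAB j).symm B).1.image (fun x => -x)) = B.1 := by
      have := congrArg Subtype.val ((negAB j).right_inv B)
      exact this
    rw [this]
    exact hB

lemma setSminus' (I : ℤ → Ω → Bool) (j : ℕ) :
    {ω | SminusFn I ω = (j : ℕ∞)} = ⋃ (B : Bj j), negEq I B.1 :=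
  setSminus I j

lemma bwd_eq_fwd_flip (B : Finset ℤ) (hB : ∀ b ∈ B, b < 0) :
    bwd I B = fwd (flip I) (B.image (fun x => -x)) := by
  rw [fwd_flip]
  congr 1
  rw [Finset.image_image]
  have : ((fun x : ℤ => -x) ∘ (fun x : ℤ => -x)) = id := by funext x; simp
  rw [this, Finset.image_id]

lemma bwd_disjoint {j : ℕ} (hj : 1 ≤ j) : Pairwise (Function.onFun Disjoint
    (fun B : Bj j => bwd I B.1)) := by
  intro B B' hne
  have h1 : bwd I B.1 = fwd (flip I) ((negAB j).symm B).1 := by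
    rw [fwd_flip]
    exact (congrArg (fun C : Bj j => bwd I C.1) ((negAB j).right_inv B)).symm
  have h2 : bwd I B'.1 = fwd (flip I) ((negAB j).symm B').1 := by
    rw [fwd_flip]
    exact (congrArg (fun C : Bj j => bwd I C.1) ((negAB j).right_inv B')).symm
  rw [Function.onFun, h1, h2]
  exact fwd_disjoint hj (fun h => hne ((negAB j).symm.injective h))

end Mirror


/-! ### Probability layer -/

section Prob

variable {Ω : Type*} [MeasurableSpace Ω]

lemma prob_inter_conull (P : Measure Ω) [IsProbabilityMeasure P] {A : Set Ω}
    (hmA : MeasurableSet A) (h1 : P A = 1) (B : Set Ω) : P (B ∩ A) = P B := by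
  have hc : P Aᶜ = 0 := by
    rw [measure_compl hmA (measure_ne_top _ _), h1]
    simp
  apply le_antisymm (measure_mono Set.inter_subset_left)
  calc P B ≤ P ((B ∩ A) ∪ Aᶜ) := by
        apply measure_mono
        intro x hx
        by_cases h : x ∈ A
        · exact Or.inl ⟨hx, h⟩
        · exact Or.inr h
  _ ≤ P (B ∩ A) + P Aᶜ := measure_union_le _ _
  _ = P (B ∩ A) := by rw [hc, add_zero]

variable (P : Measure Ω) [IsProbabilityMeasure P] (I : ℤ → Ω → Bool)
variable {Ωn : ℕ → Type*} [∀ n, MeasurableSpace (Ωn n)]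
variable (Pn : ∀ n, Measure (Ωn n)) (In : ∀ n, ℤ → Ωn n → Bool)

/-- The hypothesis pack of Assumption 1. -/
structure Pack : Prop where
  hPn : ∀ n, IsProbabilityMeasure (Pn n)
  hpos : ∀ n, 0 < Pn n {ω | In n 0 ω = true}
  hstat : ∀ n (F : Finset ℤ) (ε : ℤ → Bool) (k : ℤ),
      Pn n {ω | ∀ t ∈ F, In n t ω = ε t} = Pn n {ω | ∀ t ∈ F, In n (t + k) ω = ε t}
  hconv : ∀ (F : Finset ℤ) (ε : ℤ → Bool),
      Tendsto (fun n =>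
          Pn n ({ω | ∀ t ∈ F, In n t ω = ε t} ∩ {ω | In n 0 ω = true})
            / Pn n {ω | In n 0 ω = true}) atTop
        (nhds (P {ω | ∀ t ∈ F, I t ω = ε t}))

variable {P I Pn In}

lemma Pack.prob_I0 (h : Pack P I Pn In) : P {ω | I 0 ω = true} = 1 := by
  have h1 := h.hconv {0} (fun _ => true)
  have hset : {ω | ∀ t ∈ ({0} : Finset ℤ), I t ω = true} = {ω | I 0 ω = true} := by
    ext ω; simp
  rw [hset] at h1
  have h2 : (fun n =>
      Pn n ({ω | ∀ t ∈ ({0} : Finset ℤ), In n t ω = true} ∩ {ω | In n 0 ω = true})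
        / Pn n {ω | In n 0 ω = true}) = fun _ => (1 : ℝ≥0∞) := by
    funext n
    have hset2 : {ω | ∀ t ∈ ({0} : Finset ℤ), In n t ω = true} = {ω | In n 0 ω = true} := by
      ext ω; simp
    rw [hset2, Set.inter_self]
    have := h.hPn n
    exact ENNReal.div_self (h.hpos n).ne' (measure_ne_top _ _)
  rw [h2] at h1
  exact (tendsto_nhds_unique tendsto_const_nhds h1).symm

/-- The key shift lemma for cylinder probabilities. -/
lemma Pack.cyl_shift (h : Pack P I Pn In) {F : Finset ℤ} {ε : ℤ → Bool}
    (h0 : (0 : ℤ) ∈ F) (hε0 : ε 0 = true) {s : ℤ} (hs : s ∈ F) (hεs : ε s = true) :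
    P (cyl I F ε) = P (cyl I (F.image (· - s)) (fun t => ε (t + s))) := by
  have h1 := h.hconv F ε
  have h2 := h.hconv (F.image (· - s)) (fun t => ε (t + s))
  have hseq : ∀ n,
      Pn n ({ω | ∀ t ∈ F.image (· - s), In n t ω = ε (t + s)} ∩ {ω | In n 0 ω = true})
        / Pn n {ω | In n 0 ω = true}
      = Pn n ({ω | ∀ t ∈ F, In n t ω = ε t} ∩ {ω | In n 0 ω = true})
        / Pn n {ω | In n 0 ω = true} := by
    intro n
    congr 1
    have e1 : {ω | ∀ t ∈ F.image (· - s), In n t ω = ε (t + s)} ∩ {ω | In n 0 ω = true}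
        = {ω | ∀ t ∈ F.image (· - s), In n t ω = ε (t + s)} := by
      apply Set.inter_eq_self_of_subset_left
      intro ω hω
      have h0' : (0 : ℤ) ∈ F.image (· - s) := by
        simp only [Finset.mem_image]
        exact ⟨s, hs, sub_self s⟩
      have := hω 0 h0'
      simpa [hεs] using this
    have e2 : {ω | ∀ t ∈ F, In n t ω = ε t} ∩ {ω | In n 0 ω = true}
        = {ω | ∀ t ∈ F, In n t ω = ε t} := by
      apply Set.inter_eq_self_of_subset_left
      intro ω hω
      have := hω 0 h0
      simpa [hε0] using this
    rw [e1, e2]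
    have e3 : {ω | ∀ t ∈ F, In n (t + (-s)) ω = ε t}
        = {ω | ∀ t ∈ F.image (· - s), In n t ω = ε (t + s)} := by
      ext ω
      simp only [Set.mem_setOf_eq, Finset.mem_image]
      constructor
      · rintro hω t ⟨u, hu, rfl⟩
        have := hω u hu
        simpa [sub_eq_add_neg] using this
      · intro hω t ht
        have := hω (t - s) ⟨t, ht, rfl⟩
        simpa [sub_eq_add_neg] using this
    rw [← e3, ← h.hstat n F ε (-s)]
  have h2' : Tendsto (fun n =>
      Pn n ({ω | ∀ t ∈ F, In n t ω = ε t} ∩ {ω | In n 0 ω = true})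
        / Pn n {ω | In n 0 ω = true}) atTop
      (nhds (P {ω | ∀ t ∈ F.image (· - s), I t ω = ε (t + s)})) := by
    exact h2.congr fun n => hseq n
  exact tendsto_nhds_unique h1 h2'

/-! window exhaustion -/

def win (m : ℕ) : Finset ℤ := Finset.Icc (-(m : ℤ)) m

lemma mem_win (t : ℤ) : ∀ m : ℕ, t.natAbs ≤ m → t ∈ win m := by
  intro m hm
  have h2 : |t| ≤ (m : ℤ) := by rwa [Int.abs_eq_natAbs, Int.ofNat_le]
  simp only [win, Finset.mem_Icc]
  exact abs_le.mp h2

lemma win_mono : Monotone win := fun m m' h =>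
  Finset.Icc_subset_Icc (by simp [h]) (by exact_mod_cast h)

/-- continuity from above for cylinder events along exhaustions. -/
lemma tendsto_cyl (hI : ∀ t, Measurable (I t)) (ε : ℤ → Bool)
    (W : ℕ → Finset ℤ) (hmono : Monotone W) (hexh : ∀ t : ℤ, ∃ m, t ∈ W m) :
    Tendsto (fun m => P (cyl I (W m) ε)) atTop (nhds (P {ω | ∀ t : ℤ, I t ω = ε t})) := by
  have hiInter : ⋂ m, cyl I (W m) ε = {ω | ∀ t : ℤ, I t ω = ε t} := by
    ext ω
    simp only [Set.mem_iInter, cyl, Set.mem_setOf_eq]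
    constructor
    · intro h t
      obtain ⟨m, hm⟩ := hexh t
      exact h m t hm
    · intro h m t _
      exact h t
  have := tendsto_measure_iInter_atTop (μ := P) (s := fun m => cyl I (W m) ε)
    (fun m => (measurableSet_cyl hI _ ε).nullMeasurableSet)
    (fun m m' hmm' => fun ω hω t ht => hω t (hmono hmm' ht))
    ⟨0, measure_ne_top _ _⟩
  rwa [hiInter] at this

/-- The shift lemma for full-pattern probabilities. -/
lemma Pack.cEq_shift (h : Pack P I Pn In) (hI : ∀ t, Measurable (I t))
    {T : Finset ℤ} (h0 : (0 : ℤ) ∈ T) {s : ℤ} (hs : s ∈ T) :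
    P (cEq I T) = P (cEq I (T.image (· - s))) := by
  classical
  set εT : ℤ → Bool := fun t => decide (t ∈ T) with hεT
  set M : ℕ := T.sup (·.natAbs) with hM
  have hTwin : ∀ m : ℕ, T ⊆ win (M + m) := by
    intro m t ht
    exact mem_win t _ (le_trans (Finset.le_sup (f := (·.natAbs)) ht) (Nat.le_add_right _ _))
  have hcEqT : {ω | ∀ t : ℤ, I t ω = εT t} = cEq I T := rfl
  have h1 : Tendsto (fun m => P (cyl I (win (M + m)) εT)) atTop (nhds (P (cEq I T))) := by
    rw [← hcEqT]
    exact tendsto_cyl (P := P) (I := I) hI εT (fun m => win (M + m))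
      (fun m m' hh => win_mono (by omega)) (fun t => ⟨t.natAbs, mem_win t _ (by omega)⟩)
  have hcEq' : {ω | ∀ t : ℤ, I t ω = εT (t + s)} = cEq I (T.image (· - s)) := by
    ext ω
    simp only [cEq, Set.mem_setOf_eq, hεT]
    refine forall_congr' fun t => ?_
    have hiff : (t + s ∈ T) ↔ (t ∈ T.image (· - s)) := mem_image_sub.symm
    rw [decide_eq_decide.mpr hiff]
  have h2 : Tendsto (fun m => P (cyl I ((win (M + m)).image (· - s)) (fun t => εT (t + s))))
      atTop (nhds (P (cEq I (T.image (· - s))))) := by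
    rw [← hcEq']
    exact tendsto_cyl (P := P) (I := I) hI (fun t => εT (t + s))
      (fun m => (win (M + m)).image (· - s))
      (fun m m' hh => Finset.image_subset_image (win_mono (by omega)))
      (fun t => ⟨(t + s).natAbs, Finset.mem_image.mpr ⟨t + s, mem_win _ _ (by omega), by ring⟩⟩)
  have heq : ∀ m, P (cyl I (win (M + m)) εT)
      = P (cyl I ((win (M + m)).image (· - s)) (fun t => εT (t + s))) := by
    intro m
    refine h.cyl_shift ?_ ?_ (hTwin m hs) ?_
    · exact mem_win 0 _ (by omega)
    · simp [hεT, h0]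
    · simp [hεT, hs]
  exact tendsto_nhds_unique (h1.congr heq) h2

end Prob


/-! ### Measure identities -/

section MeasureIds

variable {Ω : Type*} [MeasurableSpace Ω] {P : Measure Ω} [IsProbabilityMeasure P]
variable {I : ℤ → Ω → Bool}
variable {Ωn : ℕ → Type*} [∀ n, MeasurableSpace (Ωn n)]
variable {Pn : ∀ n, Measure (Ωn n)} {In : ∀ n, ℤ → Ωn n → Bool}

lemma enat_tail_iff (j : ℕ) (x : ℕ∞) :
    (j : ℕ∞) ≤ x ↔ (x = (j : ℕ∞) ∨ ((j + 1 : ℕ) : ℕ∞) ≤ x) := by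
  rcases eq_or_ne x ⊤ with rfl | hx
  · simp
  · lift x to ℕ using hx
    constructor
    · intro h
      have hjx : j ≤ x := by exact_mod_cast h
      rcases eq_or_lt_of_le hjx with h' | h'
      · exact Or.inl (by exact_mod_cast h'.symm)
      · exact Or.inr (by exact_mod_cast h')
    · rintro (h | h)
      · exact le_of_eq h.symm
      · have : j + 1 ≤ x := by exact_mod_cast h
        exact_mod_cast (by omega : j ≤ x)

lemma ne_top_iUnion (f : Ω → ℕ∞) : {ω | f ω ≠ ⊤} = ⋃ (j : ℕ), {ω | f ω = (j : ℕ∞)} := by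
  ext ω
  simp only [Set.mem_setOf_eq, Set.mem_iUnion]
  constructor
  · intro h
    lift f ω to ℕ using h with m hm
    exact ⟨m, rfl⟩
  · rintro ⟨j, hj⟩
    rw [hj]
    simp

lemma point_disjoint (f : Ω → ℕ∞) : Pairwise (Function.onFun Disjoint
    (fun j : ℕ => {ω | f ω = (j : ℕ∞)})) := by
  intro j j' hne
  rw [Function.onFun, Set.disjoint_left]
  intro ω hω hω'
  apply hne
  have : ((j : ℕ∞)) = (j' : ℕ∞) := hω.symm.trans hω'
  exact_mod_cast this

lemma measurableSet_Splus_eq (hI : ∀ t, Measurable (I t)) (j : ℕ) :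
    MeasurableSet {ω | SplusFn I ω = (j : ℕ∞)} := by
  rw [setSplus]
  exact MeasurableSet.iUnion (fun A => measurableSet_posEq hI A.1)

lemma measurableSet_Sminus_eq (hI : ∀ t, Measurable (I t)) (j : ℕ) :
    MeasurableSet {ω | SminusFn I ω = (j : ℕ∞)} := by
  rw [setSminus]
  exact MeasurableSet.iUnion (fun B => measurableSet_negEq hI B.1)

lemma measurableSet_Si_eq (hI : ∀ t, Measurable (I t)) (k : ℕ) :
    MeasurableSet {ω | SiFn I ω = (k : ℕ∞)} := by
  rw [setSi]
  exact MeasurableSet.iUnion (fun T => measurableSet_cEq hI T.1)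

/-- `fwd` as a cylinder event. -/
lemma fwd_eq_cyl {j : ℕ} (hj : 1 ≤ j) (A : Aj j) :
    fwd I A.1 = cyl I (insert 0 (Finset.Icc 1 (A.1.max' (Aj_nonempty hj A))))
      (fun t => decide (t ∈ insert 0 A.1)) := by
  set M := A.1.max' (Aj_nonempty hj A) with hM
  ext ω
  simp only [fwd, cyl, Set.mem_setOf_eq]
  constructor
  · rintro ⟨h0, hpat⟩
    intro t ht
    rcases Finset.mem_insert.mp ht with rfl | htIcc
    · simp [h0]
    · obtain ⟨ht1, htM⟩ := Finset.mem_Icc.mp htIcc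
      rw [hpat t ht1 ⟨M, A.1.max'_mem _, htM⟩]
      apply decide_eq_decide.mpr
      rw [Finset.mem_insert]
      constructor
      · exact Or.inr
      · rintro (rfl | hmem)
        · omega
        · exact hmem
  · intro hcyl
    constructor
    · have := hcyl 0 (Finset.mem_insert_self _ _)
      simpa using this
    · intro t ht1 hex
      obtain ⟨a, haA, hta⟩ := hex
      have htM : t ≤ M := le_trans hta (Finset.le_max' _ _ haA)
      have := hcyl t (Finset.mem_insert.mpr (Or.inr (Finset.mem_Icc.mpr ⟨ht1, htM⟩)))
      rw [this]
      apply decide_eq_decide.mpr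
      rw [Finset.mem_insert]
      constructor
      · rintro (rfl | hmem)
        · omega
        · exact hmem
      · exact Or.inr

/-- `bwd` as a cylinder event. -/
lemma bwd_eq_cyl {j : ℕ} (hj : 1 ≤ j) (B : Bj j) :
    bwd I B.1 = cyl I (insert 0 (Finset.Icc (B.1.min' (Bj_nonempty hj B)) (-1)))
      (fun t => decide (t ∈ insert 0 B.1)) := by
  set m := B.1.min' (Bj_nonempty hj B) with hm
  ext ω
  simp only [bwd, cyl, Set.mem_setOf_eq]
  constructor
  · rintro ⟨h0, hpat⟩
    intro t ht
    rcases Finset.mem_insert.mp ht with rfl | htIcc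
    · simp [h0]
    · obtain ⟨htm, ht1⟩ := Finset.mem_Icc.mp htIcc
      rw [hpat t ht1 ⟨m, B.1.min'_mem _, htm⟩]
      apply decide_eq_decide.mpr
      rw [Finset.mem_insert]
      constructor
      · exact Or.inr
      · rintro (rfl | hmem)
        · omega
        · exact hmem
  · intro hcyl
    constructor
    · have := hcyl 0 (Finset.mem_insert_self _ _)
      simpa using this
    · intro t ht1 hex
      obtain ⟨b, hbB, hbt⟩ := hex
      have htm : m ≤ t := le_trans (Finset.min'_le _ _ hbB) hbt
      have := hcyl t (Finset.mem_insert.mpr (Or.inr (Finset.mem_Icc.mpr ⟨htm, ht1⟩)))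
      rw [this]
      apply decide_eq_decide.mpr
      rw [Finset.mem_insert]
      constructor
      · rintro (rfl | hmem)
        · omega
        · exact hmem
      · exact Or.inr

/-- The forward tail event probability equals the reflected backward one. -/
lemma P_fwd_eq_P_bwd (h : Pack P I Pn In) {j : ℕ} (hj : 1 ≤ j) (A : Aj j) :
    P (fwd I A.1) = P (bwd I (toB hj A).1) := by
  set M := A.1.max' (Aj_nonempty hj A) with hM
  have hMpos : 0 < M := A.2.2 _ (A.1.max'_mem _)
  have hshift := h.cyl_shift (F := insert 0 (Finset.Icc 1 M))
    (ε := fun t => decide (t ∈ insert 0 A.1)) (Finset.mem_insert_self _ _)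
    (by simp) (s := M)
    (Finset.mem_insert.mpr (Or.inr (Finset.mem_Icc.mpr ⟨hMpos, le_refl M⟩)))
    (by simp [hM, A.1.max'_mem (Aj_nonempty hj A)])
  rw [fwd_eq_cyl hj A, bwd_eq_cyl hj (toB hj A), hshift, min'_toB hj A]
  have hF : (insert 0 (Finset.Icc 1 M)).image (· - M) = insert 0 (Finset.Icc (-M) (-1)) := by
    ext x
    rw [mem_image_sub]
    simp only [Finset.mem_insert, Finset.mem_Icc]
    omega
  have hε : (fun t => decide (t + M ∈ insert 0 A.1))
      = (fun t => decide (t ∈ insert 0 (toB hj A).1)) := by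
    funext t
    apply decide_eq_decide.mpr
    rw [insert_toB hj A, mem_image_sub]
  rw [hF, hε]

/-- Equality of tail probabilities. -/
lemma tail_eq (h : Pack P I Pn In) (hI : ∀ t, Measurable (I t)) {j : ℕ} (hj : 1 ≤ j) :
    P {ω | (j : ℕ∞) ≤ SplusFn I ω} = P {ω | (j : ℕ∞) ≤ SminusFn I ω} := by
  have hI0m : MeasurableSet {ω | I 0 ω = true} := (hI 0) (measurableSet_singleton _)
  have h1 : P {ω | (j : ℕ∞) ≤ SplusFn I ω}
      = P ({ω | (j : ℕ∞) ≤ SplusFn I ω} ∩ {ω | I 0 ω = true}) :=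
    (prob_inter_conull P hI0m h.prob_I0 _).symm
  have h2 : P {ω | (j : ℕ∞) ≤ SminusFn I ω}
      = P ({ω | (j : ℕ∞) ≤ SminusFn I ω} ∩ {ω | I 0 ω = true}) :=
    (prob_inter_conull P hI0m h.prob_I0 _).symm
  rw [h1, h2, setTailPlus I hj, setTailMinus I hj,
    measure_iUnion (fwd_disjoint hj) (fun A => measurableSet_fwd hI A.1),
    measure_iUnion (bwd_disjoint hj) (fun B => measurableSet_bwd hI B.1)]
  calc ∑' (A : Aj j), P (fwd I A.1) = ∑' (A : Aj j), P (bwd I ((equivAB hj A).1)) :=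
        tsum_congr (fun A => P_fwd_eq_P_bwd h hj A)
  _ = ∑' (B : Bj j), P (bwd I B.1) := Equiv.tsum_eq (equivAB hj) (fun B => P (bwd I B.1))

lemma tail_eq_all (h : Pack P I Pn In) (hI : ∀ t, Measurable (I t)) (j : ℕ) :
    P {ω | (j : ℕ∞) ≤ SplusFn I ω} = P {ω | (j : ℕ∞) ≤ SminusFn I ω} := by
  rcases Nat.eq_zero_or_pos j with rfl | hj
  · have e1 : {ω | ((0 : ℕ) : ℕ∞) ≤ SplusFn I ω} = Set.univ :=
      Set.eq_univ_of_forall (fun ω => by simp)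
    have e2 : {ω | ((0 : ℕ) : ℕ∞) ≤ SminusFn I ω} = Set.univ :=
      Set.eq_univ_of_forall (fun ω => by simp)
    rw [e1, e2]
  · exact tail_eq h hI hj

/-- Splitting a tail into the point mass and the next tail. -/
lemma tail_split (P : Measure Ω) [IsProbabilityMeasure P]
    (f : Ω → ℕ∞) (hm : ∀ j : ℕ, MeasurableSet {ω | f ω = (j : ℕ∞)}) (j : ℕ) :
    P {ω | (j : ℕ∞) ≤ f ω}
      = P {ω | ((j + 1 : ℕ) : ℕ∞) ≤ f ω} + P {ω | f ω = (j : ℕ∞)} := by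
  have hsplit : {ω | (j : ℕ∞) ≤ f ω}
      = {ω | ((j + 1 : ℕ) : ℕ∞) ≤ f ω} ∪ {ω | f ω = (j : ℕ∞)} := by
    ext ω
    simp only [Set.mem_setOf_eq, Set.mem_union]
    rw [enat_tail_iff]
    tauto
  have hdisj : Disjoint {ω | ((j + 1 : ℕ) : ℕ∞) ≤ f ω} {ω | f ω = (j : ℕ∞)} := by
    rw [Set.disjoint_left]
    intro ω hω hω'
    rw [Set.mem_setOf_eq, hω'] at hω
    have : j + 1 ≤ j := by exact_mod_cast hω
    omega
  rw [hsplit, measure_union hdisj (hm j)]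

/-- Equality of point probabilities for the two half sums. -/
lemma point_eq (h : Pack P I Pn In) (hI : ∀ t, Measurable (I t)) (j : ℕ) :
    P {ω | SplusFn I ω = (j : ℕ∞)} = P {ω | SminusFn I ω = (j : ℕ∞)} := by
  have e1 := tail_split P (SplusFn I) (measurableSet_Splus_eq hI) j
  have e2 := tail_split P (SminusFn I) (measurableSet_Sminus_eq hI) j
  rw [tail_eq_all h hI j, tail_eq_all h hI (j + 1)] at e1
  have := e1.symm.trans e2
  exact (ENNReal.add_right_inj (measure_ne_top _ _)).mp this

/-- A.s. finiteness of the backward sum. -/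
lemma prob_Sminus_fin (h : Pack P I Pn In) (hI : ∀ t, Measurable (I t))
    (hfin : P {ω | SplusFn I ω ≠ ⊤} = 1) : P {ω | SminusFn I ω ≠ ⊤} = 1 := by
  rw [ne_top_iUnion, measure_iUnion (point_disjoint _) (measurableSet_Sminus_eq hI)]
  have : ∀ j : ℕ, P {ω | SminusFn I ω = (j : ℕ∞)} = P {ω | SplusFn I ω = (j : ℕ∞)} :=
    fun j => (point_eq h hI j).symm
  rw [tsum_congr this,
    ← measure_iUnion (point_disjoint _) (measurableSet_Splus_eq hI), ← ne_top_iUnion]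
  exact hfin

lemma measurableSet_Splus_fin (hI : ∀ t, Measurable (I t)) :
    MeasurableSet {ω | SplusFn I ω ≠ ⊤} := by
  rw [ne_top_iUnion]
  exact MeasurableSet.iUnion (measurableSet_Splus_eq hI)

lemma measurableSet_Sminus_fin (hI : ∀ t, Measurable (I t)) :
    MeasurableSet {ω | SminusFn I ω ≠ ⊤} := by
  rw [ne_top_iUnion]
  exact MeasurableSet.iUnion (measurableSet_Sminus_eq hI)

/-- A.s. finiteness of the total sum. -/
lemma prob_Si_fin (h : Pack P I Pn In) (hI : ∀ t, Measurable (I t))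
    (hfin : P {ω | SplusFn I ω ≠ ⊤} = 1) : P {ω | SiFn I ω ≠ ⊤} = 1 := by
  have hsub : {ω | SminusFn I ω ≠ ⊤} ∩ {ω | SplusFn I ω ≠ ⊤} ⊆ {ω | SiFn I ω ≠ ⊤} := by
    rintro ω ⟨hm, hp⟩
    have hm' : ({t : ℤ | t < 0 ∧ I t ω = true}).Finite := Set.encard_ne_top_iff.mp hm
    have hp' : ({t : ℤ | 0 < t ∧ I t ω = true}).Finite := Set.encard_ne_top_iff.mp hp
    show SiFn I ω ≠ ⊤
    apply Set.encard_ne_top_iff.mpr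
    have hsub2 : {t : ℤ | I t ω = true}
        ⊆ ({t : ℤ | t < 0 ∧ I t ω = true} ∪ {0}) ∪ {t : ℤ | 0 < t ∧ I t ω = true} := by
      intro t ht
      rcases lt_trichotomy t 0 with h1 | h1 | h1
      · exact Or.inl (Or.inl ⟨h1, ht⟩)
      · exact Or.inl (Or.inr (by simp [h1]))
      · exact Or.inr ⟨h1, ht⟩
    exact Set.Finite.subset (Set.Finite.union (Set.Finite.union hm' (Set.finite_singleton 0)) hp')
      hsub2
  have h1 : P ({ω | SminusFn I ω ≠ ⊤} ∩ {ω | SplusFn I ω ≠ ⊤})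
      = P {ω | SminusFn I ω ≠ ⊤} :=
    prob_inter_conull P (measurableSet_Splus_fin hI) hfin _
  apply le_antisymm prob_le_one
  calc (1 : ℝ≥0∞) = P ({ω | SminusFn I ω ≠ ⊤} ∩ {ω | SplusFn I ω ≠ ⊤}) := by
        rw [h1, prob_Sminus_fin h hI hfin]
  _ ≤ P {ω | SiFn I ω ≠ ⊤} := measure_mono hsub

end MeasureIds


/-! ### Size-biasing identities -/

section QIds

variable {Ω : Type*} [MeasurableSpace Ω] {P : Measure Ω} [IsProbabilityMeasure P]
variable {I : ℤ → Ω → Bool}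
variable {Ωn : ℕ → Type*} [∀ n, MeasurableSpace (Ωn n)]
variable {Pn : ∀ n, Measure (Ωn n)} {In : ∀ n, ℤ → Ωn n → Bool}

lemma tsum_Tkj_eq (h : Pack P I Pn In) (hI : ∀ t, Measurable (I t)) {k j : ℕ} (hj : j < k) :
    ∑' (T : Tkj k j), P (cEq I T.1) = ∑' (T : Tkj k 0), P (cEq I T.1) := by
  rw [← Equiv.tsum_eq (equivTkj hj) (fun T => P (cEq I T.1))]
  refine tsum_congr fun T0 => ?_
  obtain ⟨s, hs, heq⟩ := equivTkj_spec hj T0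
  rw [heq]
  exact (h.cEq_shift hI T0.2.1 hs).symm

lemma Tkj_val_disjoint {k j : ℕ} : Pairwise (Function.onFun Disjoint
    (fun T : Tkj k j => cEq I T.1)) := by
  intro T T' hne
  exact cEq_disjoint (fun hval => hne (Subtype.ext hval))

/-- The size-biasing identity: `P(Sⁱ = k) = k * P(Sⁱ = k, S₋ = 0)`. -/
lemma P_Si_eq_mul (h : Pack P I Pn In) (hI : ∀ t, Measurable (I t)) (k : ℕ) :
    P {ω | SiFn I ω = (k : ℕ∞)}
      = (k : ℝ≥0∞) * P ({ω | SiFn I ω = (k : ℕ∞)}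
          ∩ {ω | SminusFn I ω = ((0 : ℕ) : ℕ∞)}) := by
  have hI0m : MeasurableSet {ω | I 0 ω = true} := (hI 0) (measurableSet_singleton _)
  have hstrip : ∀ X : Set Ω, P X = P (X ∩ {ω | I 0 ω = true}) :=
    fun X => (prob_inter_conull P hI0m h.prob_I0 X).symm
  rcases Nat.eq_zero_or_pos k with rfl | hk
  · have hempty : {ω | SiFn I ω = ((0 : ℕ) : ℕ∞)} ∩ {ω | I 0 ω = true} = ∅ := by
      ext ω
      simp only [Set.mem_inter_iff, Set.mem_setOf_eq, Set.mem_empty_iff_false, iff_false,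
        not_and]
      intro h1 h2
      have h1' : ({t : ℤ | I t ω = true}).encard = 0 := by exact_mod_cast h1
      have hset : ({t : ℤ | I t ω = true}) = ∅ := Set.encard_eq_zero.mp h1'
      have : (0 : ℤ) ∈ ({t : ℤ | I t ω = true}) := h2
      rw [hset] at this
      exact this
    rw [hstrip, hempty, measure_empty]
    simp
  · rw [hstrip, setSiI0 I k, measure_iUnion ?hdisj ?hmeas]
    case hdisj =>
      intro j j' hne
      rw [Function.onFun, Set.disjoint_left]
      rintro ω ⟨⟨_, hm⟩, _⟩ ⟨⟨_, hm'⟩, _⟩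
      apply hne
      have : (((j : ℕ) : ℕ∞)) = ((j' : ℕ) : ℕ∞) := hm.symm.trans hm'
      have : (j : ℕ) = (j' : ℕ) := by exact_mod_cast this
      exact Fin.ext this
    case hmeas =>
      intro j
      exact ((measurableSet_Si_eq hI k).inter (measurableSet_Sminus_eq hI j)).inter hI0m
    have hterm : ∀ j : Fin k,
        P (({ω | SiFn I ω = (k : ℕ∞)} ∩ {ω | SminusFn I ω = ((j : ℕ) : ℕ∞)})
          ∩ {ω | I 0 ω = true})
        = P (({ω | SiFn I ω = (k : ℕ∞)} ∩ {ω | SminusFn I ω = ((0 : ℕ) : ℕ∞)})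
          ∩ {ω | I 0 ω = true}) := by
      intro j
      rw [setSiSm I k (j : ℕ), setSiSm I k 0,
        measure_iUnion Tkj_val_disjoint (fun T => measurableSet_cEq hI T.1),
        measure_iUnion Tkj_val_disjoint (fun T => measurableSet_cEq hI T.1)]
      exact tsum_Tkj_eq h hI j.2
    rw [tsum_congr hterm, tsum_fintype, Finset.sum_const, Finset.card_univ, Fintype.card_fin,
      nsmul_eq_mul]
    congr 1
    exact (hstrip _).symm

lemma sum_P_Si (h : Pack P I Pn In) (hI : ∀ t, Measurable (I t))
    (hfin : P {ω | SplusFn I ω ≠ ⊤} = 1) :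
    ∑' (k : ℕ), P {ω | SiFn I ω = (k : ℕ∞)} = 1 := by
  rw [← measure_iUnion (point_disjoint (SiFn I)) (measurableSet_Si_eq hI), ← ne_top_iUnion]
  exact prob_Si_fin h hI hfin

lemma sum_q (h : Pack P I Pn In) (hI : ∀ t, Measurable (I t))
    (hfin : P {ω | SplusFn I ω ≠ ⊤} = 1) :
    ∑' (k : ℕ), P ({ω | SiFn I ω = (k : ℕ∞)} ∩ {ω | SminusFn I ω = ((0 : ℕ) : ℕ∞)})
      = P {ω | SminusFn I ω = ((0 : ℕ) : ℕ∞)} := by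
  have hdisj : Pairwise (Function.onFun Disjoint
      (fun k : ℕ => {ω | SiFn I ω = (k : ℕ∞)} ∩ {ω | SminusFn I ω = ((0 : ℕ) : ℕ∞)})) := by
    intro k k' hne
    exact Set.disjoint_of_subset Set.inter_subset_left Set.inter_subset_left
      (point_disjoint (SiFn I) hne)
  have hmeas : ∀ k : ℕ, MeasurableSet ({ω | SiFn I ω = (k : ℕ∞)}
      ∩ {ω | SminusFn I ω = ((0 : ℕ) : ℕ∞)}) :=
    fun k => (measurableSet_Si_eq hI k).inter (measurableSet_Sminus_eq hI 0)
  have hmfin : MeasurableSet {ω | SiFn I ω ≠ ⊤} := by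
    rw [ne_top_iUnion]
    exact MeasurableSet.iUnion (measurableSet_Si_eq hI)
  rw [← measure_iUnion hdisj hmeas, ← Set.iUnion_inter, ← ne_top_iUnion, Set.inter_comm]
  exact prob_inter_conull P hmfin (prob_Si_fin h hI hfin) _

/-! ### Expectations of `ℕ∞`-valued functions -/

/-- the canonical measurable version -/
def gsum (f : Ω → ℕ∞) : Ω → ℝ≥0∞ :=
  fun ω => ∑' k : ℕ, Set.indicator {ω' | f ω' = (k : ℕ∞)} (fun _ => (k : ℝ≥0∞)) ω

lemma gsum_meas {f : Ω → ℕ∞} (hmk : ∀ k : ℕ, MeasurableSet {ω | f ω = (k : ℕ∞)}) :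
    Measurable (gsum f) :=
  Measurable.ennreal_tsum (fun k => Measurable.indicator measurable_const (hmk k))

lemma prob_top_zero {f : Ω → ℕ∞} (hmk : ∀ k : ℕ, MeasurableSet {ω | f ω = (k : ℕ∞)})
    (hfin : P {ω | f ω ≠ ⊤} = 1) : P {ω | f ω = ⊤} = 0 := by
  have hc : {ω | f ω = ⊤} = {ω | f ω ≠ ⊤}ᶜ := by ext ω; simp
  have hm : MeasurableSet {ω | f ω ≠ ⊤} := by
    rw [ne_top_iUnion]; exact MeasurableSet.iUnion hmk
  rw [hc, measure_compl hm (measure_ne_top _ _), hfin]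
  simp

lemma coe_ae_eq_gsum {f : Ω → ℕ∞} (hmk : ∀ k : ℕ, MeasurableSet {ω | f ω = (k : ℕ∞)})
    (hfin : P {ω | f ω ≠ ⊤} = 1) :
    (fun ω => (f ω : ℝ≥0∞)) =ᵐ[P] gsum f := by
  rw [Filter.EventuallyEq, ae_iff]
  apply measure_mono_null _ (prob_top_zero hmk hfin)
  intro ω hω
  simp only [Set.mem_setOf_eq] at hω ⊢
  by_contra htop
  apply hω
  lift f ω to ℕ using htop with m hm
  have hfm : f ω = (m : ℕ∞) := hm.symm
  have hzero : ∀ k : ℕ, k ≠ m →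
      Set.indicator {ω' | f ω' = (k : ℕ∞)} (fun _ => (k : ℝ≥0∞)) ω = 0 := by
    intro k hk
    apply Set.indicator_of_notMem
    simp only [Set.mem_setOf_eq, hfm]
    intro hcontra
    exact hk (by exact_mod_cast hcontra.symm)
  have hmem : ω ∈ {ω' | f ω' = (m : ℕ∞)} := hfm
  have hg : gsum f ω = (m : ℝ≥0∞) := by
    rw [gsum, tsum_eq_single m hzero, Set.indicator_of_mem hmem]
  rw [hg]
  simp

lemma aemeasurable_coe_enat {f : Ω → ℕ∞} (hmk : ∀ k : ℕ, MeasurableSet {ω | f ω = (k : ℕ∞)})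
    (hfin : P {ω | f ω ≠ ⊤} = 1) : AEMeasurable (fun ω => (f ω : ℝ≥0∞)) P :=
  ⟨gsum f, gsum_meas hmk, coe_ae_eq_gsum hmk hfin⟩

lemma lintegral_enat {f : Ω → ℕ∞} (hmk : ∀ k : ℕ, MeasurableSet {ω | f ω = (k : ℕ∞)})
    (hfin : P {ω | f ω ≠ ⊤} = 1) :
    ∫⁻ ω, (f ω : ℝ≥0∞) ∂P = ∑' k : ℕ, (k : ℝ≥0∞) * P {ω | f ω = (k : ℕ∞)} := by
  rw [lintegral_congr_ae (coe_ae_eq_gsum hmk hfin)]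
  show ∫⁻ ω, ∑' k : ℕ, Set.indicator {ω' | f ω' = (k : ℕ∞)} (fun _ => (k : ℝ≥0∞)) ω ∂P = _
  rw [lintegral_tsum (fun k => (Measurable.indicator measurable_const (hmk k)).aemeasurable)]
  exact tsum_congr fun k => lintegral_indicator_const₀ (hmk k).nullMeasurableSet _

end QIds


/-! ### Final expectation lemmas and Cauchy-Schwarz -/

section Final

variable {Ω : Type*} [MeasurableSpace Ω] {P : Measure Ω} [IsProbabilityMeasure P]
variable {I : ℤ → Ω → Bool}
variable {Ωn : ℕ → Type*} [∀ n, MeasurableSpace (Ωn n)]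
variable {Pn : ∀ n, Measure (Ωn n)} {In : ∀ n, ℤ → Ωn n → Bool}

lemma ae_I0 (h : Pack P I Pn In) (hI : ∀ t, Measurable (I t)) : ∀ᵐ ω ∂P, I 0 ω = true := by
  rw [ae_iff]
  have hc : {ω | ¬ I 0 ω = true} = {ω | I 0 ω = true}ᶜ := by ext ω; simp
  have hm : MeasurableSet {ω | I 0 ω = true} := (hI 0) (measurableSet_singleton _)
  rw [hc, measure_compl hm (measure_ne_top _ _), h.prob_I0]
  simp

lemma Si_ae_split (h : Pack P I Pn In) (hI : ∀ t, Measurable (I t)) :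
    ∀ᵐ ω ∂P, (SiFn I ω : ℝ≥0∞)
      = ((SminusFn I ω : ℝ≥0∞) + 1) + (SplusFn I ω : ℝ≥0∞) := by
  filter_upwards [ae_I0 h hI] with ω h0
  have hset : {t : ℤ | I t ω = true}
      = ({t : ℤ | t < 0 ∧ I t ω = true} ∪ {(0 : ℤ)}) ∪ {t : ℤ | 0 < t ∧ I t ω = true} := by
    ext t
    simp only [Set.mem_union, Set.mem_setOf_eq, Set.mem_singleton_iff]
    constructor
    · intro ht
      rcases lt_trichotomy t 0 with h1 | h1 | h1
      · exact Or.inl (Or.inl ⟨h1, ht⟩)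
      · exact Or.inl (Or.inr h1)
      · exact Or.inr ⟨h1, ht⟩
    · rintro ((⟨_, ht⟩ | rfl) | ⟨_, ht⟩)
      · exact ht
      · exact h0
      · exact ht
  have hd1 : Disjoint ({t : ℤ | t < 0 ∧ I t ω = true}) {(0 : ℤ)} := by
    rw [Set.disjoint_right]
    intro t ht
    rcases Set.mem_singleton_iff.mp ht with rfl
    simp
  have hd2 : Disjoint (({t : ℤ | t < 0 ∧ I t ω = true}) ∪ {(0 : ℤ)})
      {t : ℤ | 0 < t ∧ I t ω = true} := by
    rw [Set.disjoint_right]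
    rintro t ⟨htpos, _⟩
    intro hmem
    rcases hmem with ⟨hneg, _⟩ | h0'
    · omega
    · rw [Set.mem_singleton_iff] at h0'
      omega
  have hkey : SiFn I ω = (SminusFn I ω + 1) + SplusFn I ω := by
    show Set.encard _ = _
    rw [hset, Set.encard_union_eq hd2, Set.encard_union_eq hd1, Set.encard_singleton]
    rfl
  rw [hkey]
  push_cast
  ring

lemma E_minus_eq_plus (h : Pack P I Pn In) (hI : ∀ t, Measurable (I t))
    (hfin : P {ω | SplusFn I ω ≠ ⊤} = 1) :
    ∫⁻ ω, (SminusFn I ω : ℝ≥0∞) ∂P = ∫⁻ ω, (SplusFn I ω : ℝ≥0∞) ∂P := by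
  rw [lintegral_enat (measurableSet_Sminus_eq hI) (prob_Sminus_fin h hI hfin),
    lintegral_enat (measurableSet_Splus_eq hI) hfin]
  exact tsum_congr fun j => by rw [point_eq h hI j]

lemma E_split (h : Pack P I Pn In) (hI : ∀ t, Measurable (I t))
    (hfin : P {ω | SplusFn I ω ≠ ⊤} = 1) :
    ∫⁻ ω, (SiFn I ω : ℝ≥0∞) ∂P
      = 1 + 2 * ∫⁻ ω, (SplusFn I ω : ℝ≥0∞) ∂P := by
  have hmeasm := aemeasurable_coe_enat (P := P) (f := SminusFn I)
    (measurableSet_Sminus_eq hI) (prob_Sminus_fin h hI hfin)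
  have hmeasp := aemeasurable_coe_enat (P := P) (f := SplusFn I)
    (measurableSet_Splus_eq hI) hfin
  rw [lintegral_congr_ae (Si_ae_split h hI), lintegral_add_right' _ hmeasp,
    lintegral_add_right' _ aemeasurable_const, lintegral_const,
    E_minus_eq_plus h hI hfin]
  simp only [measure_univ, mul_one]
  ring

/-- Discrete Cauchy-Schwarz in `ℝ≥0∞`. -/
lemma cs_aux (q : ℕ → ℝ≥0∞) (h1 : ∑' k : ℕ, (k : ℝ≥0∞) * q k = 1) :
    1 ≤ (∑' k : ℕ, q k) * (∑' k : ℕ, ((k : ℝ≥0∞) * k) * q k) := by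
  have expand : ∀ f g : ℕ → ℝ≥0∞,
      (∑' k : ℕ, f k) * (∑' l : ℕ, g l) = ∑' k : ℕ, ∑' l : ℕ, f k * g l := by
    intro f g
    rw [← ENNReal.tsum_mul_right]
    exact tsum_congr fun k => (ENNReal.tsum_mul_left).symm
  have hterm : ∀ k l : ℕ, 2 * (((k : ℝ≥0∞) * q k) * ((l : ℝ≥0∞) * q l))
      ≤ q k * (((l : ℝ≥0∞) * l) * q l) + q l * (((k : ℝ≥0∞) * k) * q k) := by
    intro k l
    have hnat : 2 * (k * l) ≤ l * l + k * k := by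
      zify
      nlinarith [sq_nonneg ((k : ℤ) - (l : ℤ))]
    calc 2 * (((k : ℝ≥0∞) * q k) * ((l : ℝ≥0∞) * q l))
        = ((2 * (k * l) : ℕ) : ℝ≥0∞) * (q k * q l) := by push_cast; ring
    _ ≤ ((l * l + k * k : ℕ) : ℝ≥0∞) * (q k * q l) :=
        mul_le_mul_left (by exact_mod_cast hnat) _
    _ = q k * (((l : ℝ≥0∞) * l) * q l) + q l * (((k : ℝ≥0∞) * k) * q k) := by
        push_cast; ring
  have hLHS : 2 * ((∑' k : ℕ, (k : ℝ≥0∞) * q k) * (∑' l : ℕ, (l : ℝ≥0∞) * q l))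
      = ∑' k : ℕ, ∑' l : ℕ, 2 * (((k : ℝ≥0∞) * q k) * ((l : ℝ≥0∞) * q l)) := by
    rw [expand, ← ENNReal.tsum_mul_left]
    exact tsum_congr fun k => (ENNReal.tsum_mul_left).symm
  have hRHS : ∑' k : ℕ, ∑' l : ℕ,
      (q k * (((l : ℝ≥0∞) * l) * q l) + q l * (((k : ℝ≥0∞) * k) * q k))
      = 2 * ((∑' k : ℕ, q k) * (∑' k : ℕ, ((k : ℝ≥0∞) * k) * q k)) := by
    have hstep : ∑' k : ℕ, ∑' l : ℕ,
        (q k * (((l : ℝ≥0∞) * l) * q l) + q l * (((k : ℝ≥0∞) * k) * q k))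
        = (∑' k : ℕ, ∑' l : ℕ, q k * (((l : ℝ≥0∞) * l) * q l))
          + (∑' k : ℕ, ∑' l : ℕ, q l * (((k : ℝ≥0∞) * k) * q k)) := by
      rw [← ENNReal.tsum_add]
      exact tsum_congr fun k => ENNReal.tsum_add
    rw [hstep]
    have e1 : ∑' k : ℕ, ∑' l : ℕ, q k * (((l : ℝ≥0∞) * l) * q l)
        = (∑' k : ℕ, q k) * (∑' l : ℕ, ((l : ℝ≥0∞) * l) * q l) := (expand _ _).symm
    have e2 : ∑' k : ℕ, ∑' l : ℕ, q l * (((k : ℝ≥0∞) * k) * q k)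
        = (∑' k : ℕ, ((k : ℝ≥0∞) * k) * q k) * (∑' l : ℕ, q l) := by
      calc ∑' k : ℕ, ∑' l : ℕ, q l * (((k : ℝ≥0∞) * k) * q k)
          = ∑' k : ℕ, ∑' l : ℕ, (((k : ℝ≥0∞) * k) * q k) * q l :=
            tsum_congr fun k => tsum_congr fun l => mul_comm _ _
      _ = (∑' k : ℕ, ((k : ℝ≥0∞) * k) * q k) * (∑' l : ℕ, q l) := (expand _ _).symm
    rw [e1, e2]
    ring
  have hchain : 2 * ((∑' k : ℕ, (k : ℝ≥0∞) * q k) * (∑' l : ℕ, (l : ℝ≥0∞) * q l))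
      ≤ 2 * ((∑' k : ℕ, q k) * (∑' k : ℕ, ((k : ℝ≥0∞) * k) * q k)) := by
    rw [hLHS, ← hRHS]
    exact ENNReal.tsum_le_tsum fun k => ENNReal.tsum_le_tsum fun l => hterm k l
  rw [h1, mul_one] at hchain
  exact (ENNReal.mul_le_mul_iff_right (by norm_num) ENNReal.ofNat_ne_top).mp hchain

end Final

end ThmAux

/-- Theorem 4.2(b), Equation (4.9): under Assumption 1, if `θ = P(S₊ⁱ = 0) > 0`
and `P(S₊ⁱ < ∞) = 1`, then `θ⁻¹ = E(Sᵗ) ≤ E(Sⁱ) = 1 + 2·E(S₊ⁱ)`. -/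
theorem theta_inv_eq_typical_mean_le_inspected_mean
    {Ω : Type*} [MeasurableSpace Ω] (P : Measure Ω) [IsProbabilityMeasure P]
    (I : ℤ → Ω → Bool) (hI : ∀ t, Measurable (I t))
    {Ωn : ℕ → Type*} [∀ n, MeasurableSpace (Ωn n)]
    (Pn : ∀ n, Measure (Ωn n)) (hPn : ∀ n, IsProbabilityMeasure (Pn n))
    (In : ∀ n, ℤ → Ωn n → Bool) (hIn : ∀ n t, Measurable (In n t))
    -- `P(I₀ⁿ = 1) > 0` for all `n`
    (hpos : ∀ n, 0 < Pn n {ω | In n 0 ω = true})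
    -- stationarity of each `(Iₜⁿ)ₜ`
    (hstat : ∀ n (F : Finset ℤ) (ε : ℤ → Bool) (k : ℤ),
      Pn n {ω | ∀ t ∈ F, In n t ω = ε t} = Pn n {ω | ∀ t ∈ F, In n (t + k) ω = ε t})
    -- convergence of the conditional finite-dimensional distributions
    (hconv : ∀ (F : Finset ℤ) (ε : ℤ → Bool),
      Tendsto (fun n =>
          Pn n ({ω | ∀ t ∈ F, In n t ω = ε t} ∩ {ω | In n 0 ω = true})
            / Pn n {ω | In n 0 ω = true}) atTop
        (nhds (P {ω | ∀ t ∈ F, I t ω = ε t})))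

    (hθ : 0 < P {ω | SplusFn I ω = 0}) (hfin : P {ω | SplusFn I ω ≠ ⊤} = 1) :
    (P {ω | SplusFn I ω = 0})⁻¹ = (∑' k : ℕ, (k : ℝ≥0∞) * (P ({ω | SiFn I ω = ((k : ℕ) : ℕ∞)} ∩ {ω | SminusFn I ω = 0}) / P {ω | SminusFn I ω = 0}))
    ∧ (∑' k : ℕ, (k : ℝ≥0∞) * (P ({ω | SiFn I ω = ((k : ℕ) : ℕ∞)} ∩ {ω | SminusFn I ω = 0}) / P {ω | SminusFn I ω = 0})) ≤ ∫⁻ ω, (SiFn I ω : ℝ≥0∞) ∂P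
    ∧ (∫⁻ ω, (SiFn I ω : ℝ≥0∞) ∂P) = 1 + 2 * (∫⁻ ω, (SplusFn I ω : ℝ≥0∞) ∂P) := by
  classical
  have pack : ThmAux.Pack P I Pn In := ⟨hPn, hpos, hstat, hconv⟩
  have hpoint0 : P {ω | SplusFn I ω = (0 : ℕ∞)} = P {ω | SminusFn I ω = (0 : ℕ∞)} := by
    have := ThmAux.point_eq pack hI 0
    simpa only [Nat.cast_zero] using this
  have hQ1 : ∀ k : ℕ, P {ω | SiFn I ω = (k : ℕ∞)}
      = (k : ℝ≥0∞) * P ({ω | SiFn I ω = (k : ℕ∞)} ∩ {ω | SminusFn I ω = (0 : ℕ∞)}) := by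
    intro k
    have := ThmAux.P_Si_eq_mul pack hI k
    simpa only [Nat.cast_zero] using this
  have hsum1 : ∑' k : ℕ, (k : ℝ≥0∞)
      * P ({ω | SiFn I ω = (k : ℕ∞)} ∩ {ω | SminusFn I ω = (0 : ℕ∞)}) = 1 := by
    rw [← ThmAux.sum_P_Si pack hI hfin]
    exact tsum_congr fun k => (hQ1 k).symm
  have hQ3 : ∑' k : ℕ, P ({ω | SiFn I ω = (k : ℕ∞)} ∩ {ω | SminusFn I ω = (0 : ℕ∞)})
      = P {ω | SminusFn I ω = (0 : ℕ∞)} := by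
    have := ThmAux.sum_q pack hI hfin
    simpa only [Nat.cast_zero] using this
  have hθm0 : P {ω | SminusFn I ω = (0 : ℕ∞)} ≠ 0 := by
    rw [← hpoint0]
    exact hθ.ne'
  have hθmtop : P {ω | SminusFn I ω = (0 : ℕ∞)} ≠ ⊤ := measure_ne_top _ _
  have hpart1 : (P {ω | SplusFn I ω = 0})⁻¹
      = ∑' k : ℕ, (k : ℝ≥0∞) * (P ({ω | SiFn I ω = ((k : ℕ) : ℕ∞)}
          ∩ {ω | SminusFn I ω = 0}) / P {ω | SminusFn I ω = 0}) := by
    rw [hpoint0]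
    calc (P {ω | SminusFn I ω = (0 : ℕ∞)})⁻¹
        = (∑' k : ℕ, (k : ℝ≥0∞)
            * P ({ω | SiFn I ω = (k : ℕ∞)} ∩ {ω | SminusFn I ω = (0 : ℕ∞)}))
            * (P {ω | SminusFn I ω = (0 : ℕ∞)})⁻¹ := by
          rw [hsum1, one_mul]
    _ = ∑' k : ℕ, ((k : ℝ≥0∞)
          * P ({ω | SiFn I ω = (k : ℕ∞)} ∩ {ω | SminusFn I ω = (0 : ℕ∞)}))
          * (P {ω | SminusFn I ω = (0 : ℕ∞)})⁻¹ := (ENNReal.tsum_mul_right).symm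
    _ = ∑' k : ℕ, (k : ℝ≥0∞) * (P ({ω | SiFn I ω = ((k : ℕ) : ℕ∞)}
          ∩ {ω | SminusFn I ω = 0}) / P {ω | SminusFn I ω = 0}) := by
          refine tsum_congr fun k => ?_
          rw [div_eq_mul_inv, mul_assoc]
  have hESi : ∫⁻ ω, (SiFn I ω : ℝ≥0∞) ∂P
      = ∑' k : ℕ, (k : ℝ≥0∞) * P {ω | SiFn I ω = (k : ℕ∞)} :=
    ThmAux.lintegral_enat (ThmAux.measurableSet_Si_eq hI) (ThmAux.prob_Si_fin pack hI hfin)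
  have hE2 : ∫⁻ ω, (SiFn I ω : ℝ≥0∞) ∂P
      = ∑' k : ℕ, ((k : ℝ≥0∞) * k)
          * P ({ω | SiFn I ω = (k : ℕ∞)} ∩ {ω | SminusFn I ω = (0 : ℕ∞)}) := by
    rw [hESi]
    refine tsum_congr fun k => ?_
    rw [hQ1 k]
    ring
  have hkey : 1 ≤ (∑' k : ℕ, P ({ω | SiFn I ω = (k : ℕ∞)} ∩ {ω | SminusFn I ω = (0 : ℕ∞)}))
      * (∑' k : ℕ, ((k : ℝ≥0∞) * k)
          * P ({ω | SiFn I ω = (k : ℕ∞)} ∩ {ω | SminusFn I ω = (0 : ℕ∞)})) :=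
    ThmAux.cs_aux _ hsum1
  rw [hQ3, ← hE2] at hkey
  have hpart2 : (∑' k : ℕ, (k : ℝ≥0∞) * (P ({ω | SiFn I ω = ((k : ℕ) : ℕ∞)}
      ∩ {ω | SminusFn I ω = 0}) / P {ω | SminusFn I ω = 0}))
      ≤ ∫⁻ ω, (SiFn I ω : ℝ≥0∞) ∂P := by
    rw [← hpart1, hpoint0]
    calc (P {ω | SminusFn I ω = (0 : ℕ∞)})⁻¹
        = (P {ω | SminusFn I ω = (0 : ℕ∞)})⁻¹ * 1 := (mul_one _).symm
    _ ≤ (P {ω | SminusFn I ω = (0 : ℕ∞)})⁻¹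
          * (P {ω | SminusFn I ω = (0 : ℕ∞)} * ∫⁻ ω, (SiFn I ω : ℝ≥0∞) ∂P) :=
        mul_le_mul_right hkey _
    _ = ((P {ω | SminusFn I ω = (0 : ℕ∞)})⁻¹ * P {ω | SminusFn I ω = (0 : ℕ∞)})
          * ∫⁻ ω, (SiFn I ω : ℝ≥0∞) ∂P := (mul_assoc _ _ _).symm
    _ = ∫⁻ ω, (SiFn I ω : ℝ≥0∞) ∂P := by
        rw [ENNReal.inv_mul_cancel hθm0 hθmtop, one_mul]
  exact ⟨hpart1, hpart2, ThmAux.E_split pack hI hfin⟩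
end
end
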